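/- arXiv:0911.2832 — 3 statements merged into one kernel-verified Lean document; each statement's English description precedes it below -/
import Mathlib

section
/- Let p be an odd prime and g a primitive root modulo p, and let b be an integer with p ∤ b. Then for every N with 1 ≤ N ≤ p−1, the exponential sum ∑_{x=1}^{N} e^{2πi b g^x / p} has absolute value O(p^{1/2} log p). -/
open Finset Complex Real

noncomputable def eC (q : ℕ) (m : ℤ) : ℂ := Complex.exp (2 * Real.pi * Complex.I * m / q)

lemma eC_eq (q : ℕ) (m : ℤ) : eC q m = Complex.exp (((2 * Real.pi * m / q : ℝ) : ℂ) * Complex.I) := by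
  unfold eC; push_cast; ring_nf

lemma abs_eC (q : ℕ) (m : ℤ) : ‖eC q m‖ = 1 := by
  rw [eC_eq]; exact Complex.norm_exp_ofReal_mul_I _

lemma eC_add (q : ℕ) (m m' : ℤ) : eC q (m + m') = eC q m * eC q m' := by
  unfold eC; rw [← Complex.exp_add]; push_cast; ring_nf

lemma eC_mul_self (q : ℕ) (k : ℤ) (hq : 0 < q) : eC q (q * k) = 1 := by
  unfold eC
  have hq' : (q:ℂ) ≠ 0 := by exact_mod_cast hq.ne'
  have : ((((q:ℤ) * k : ℤ)) : ℂ) = (q:ℂ) * (k:ℂ) := by push_cast; ring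
  rw [this]
  have h2 : (2 * ↑Real.pi * Complex.I * ((q:ℂ) * k) : ℂ) / q = k * (2 * ↑Real.pi * Complex.I) := by
    field_simp
  rw [h2, Complex.exp_int_mul_two_pi_mul_I]

lemma eC_congr (q : ℕ) (hq : 0 < q) {m m' : ℤ} (h : (q:ℤ) ∣ m - m') : eC q m = eC q m' := by
  obtain ⟨k, hk⟩ := h
  have : m = m' + q * k := by linarith
  rw [this, eC_add, eC_mul_self q k hq, mul_one]

lemma eC_pow (q : ℕ) (m : ℤ) (a : ℕ) : eC q m ^ a = eC q (m * a) := by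
  induction a with
  | zero => simp [eC]
  | succ a ih =>
      rw [pow_succ, ih, ← eC_add]
      congr 1; push_cast; ring

lemma eC_eq_one_iff (q : ℕ) (hq : 0 < q) (m : ℤ) : eC q m = 1 ↔ (q:ℤ) ∣ m := by
  rw [eC, Complex.exp_eq_one_iff]
  constructor
  · rintro ⟨k, hk⟩
    have hq' : (q:ℂ) ≠ 0 := by exact_mod_cast hq.ne'
    have hπ : (Real.pi : ℂ) ≠ 0 := by exact_mod_cast Real.pi_ne_zero
    have : (m : ℂ) = k * q := by
      field_simp at hk
      have h2 : (2:ℂ) * Real.pi * Complex.I ≠ 0 := by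
        simp [Complex.I_ne_zero, hπ]
      -- hk : 2 * π * I * m = k * (2 * π * I) * q
      have := hk
      refine mul_left_cancel₀ h2 ?_
      rw [show (2:ℂ) * Real.pi * Complex.I * (k*q) = k * (2 * Real.pi * Complex.I) * q by ring]
      linear_combination (2 * Real.pi * Complex.I) * this
    refine ⟨k, ?_⟩
    have : (m:ℂ) = ((q * k : ℤ) : ℂ) := by push_cast; linear_combination this
    exact_mod_cast this
  · rintro ⟨k, hk⟩
    refine ⟨k, ?_⟩
    have hq' : (q:ℂ) ≠ 0 := by exact_mod_cast hq.ne'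
    rw [hk]; push_cast; field_simp

lemma eC_geom (n : ℕ) (hn : 0 < n) (m : ℤ) :
    ∑ a ∈ range n, eC n m ^ a = if (n:ℤ) ∣ m then (n:ℂ) else 0 := by
  by_cases h : (n:ℤ) ∣ m
  · simp [h, (eC_eq_one_iff n hn m).2 h]
  · have hz : eC n m ≠ 1 := fun hc => h ((eC_eq_one_iff n hn m).1 hc)
    rw [geom_sum_eq hz, if_neg h]
    have h1 : eC n m ^ n = 1 := by
      rw [eC_pow, show m * (n:ℤ) = (n:ℤ) * m by ring]
      exact eC_mul_self n m hn
    rw [h1, sub_self, zero_div]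

lemma eC_zero (q : ℕ) : eC q 0 = 1 := by simp [eC]

lemma eC_congr_zmod (p : ℕ) (hp : 0 < p) {m m' : ℤ} (h : ((m : ZMod p) : ZMod p) = (m' : ZMod p)) :
    eC p m = eC p m' := by
  apply eC_congr p hp
  rwa [← ZMod.intCast_zmod_eq_zero_iff_dvd, Int.cast_sub, sub_eq_zero]

lemma sum_eC_val (p : ℕ) [NeZero p] (hp : 1 < p) : ∑ u : ZMod p, eC p (u.val) = 0 := by
  have h1 : ∑ a ∈ range p, eC p a = 0 := by
    have hnd : ¬ ((p:ℤ) ∣ 1) := by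
      intro h; have := Int.le_of_dvd one_pos h; omega
    have h2 := eC_geom p (by omega) 1
    rw [if_neg hnd] at h2
    calc ∑ a ∈ range p, eC p a = ∑ a ∈ range p, eC p 1 ^ a := by
          refine Finset.sum_congr rfl fun a _ => ?_
          rw [eC_pow, one_mul]
      _ = 0 := h2
  rw [← h1]
  refine Finset.sum_nbij' (fun u => u.val) (fun a => (a : ZMod p)) ?_ ?_ ?_ ?_ ?_
  · intro u _; exact Finset.mem_range.2 (ZMod.val_lt u)
  · intro a _; exact Finset.mem_univ _
  · intro u _; simp [ZMod.natCast_val, ZMod.cast_id]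
  · intro a ha; exact ZMod.val_cast_of_lt (Finset.mem_range.1 ha)
  · intro u _; norm_cast

lemma sum_unit_mul (p : ℕ) [NeZero p] (hp : p.Prime) (c : ZMod p) :
    ∑ u : ZMod p, eC p ((c * u).val) = if c = 0 then (p:ℂ) else 0 := by
  haveI : Fact p.Prime := ⟨hp⟩
  by_cases hc : c = 0
  · simp [hc, eC_zero, ZMod.val_zero, Finset.card_univ, ZMod.card]
  · rw [if_neg hc, ← sum_eC_val p hp.one_lt]
    exact Fintype.sum_bijective (fun u => c * u) (mulLeft_bijective₀ c hc) _ _ (fun u => rfl)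

lemma sum_Icc_one (n : ℕ) (f : ℕ → ℂ) : ∑ x ∈ Icc 1 n, f x = ∑ x ∈ range n, f (x + 1) := by
  rw [← Finset.Ico_add_one_right_eq_Icc, Finset.sum_Ico_eq_sum_range]
  simp [add_comm]

lemma sum_full (p n : ℕ) (hp : p.Prime) (hn : n = p - 1) (g : ℤ)
    (hg : orderOf ((g : ZMod p)) = n) (c : ℤ) :
    ∑ x ∈ Icc 1 n, eC p (c * g ^ x) = if (p:ℤ) ∣ c then (n:ℂ) else -1 := by
  haveI : Fact p.Prime := ⟨hp⟩
  have hp2 : 2 ≤ p := hp.two_le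
  have hn1 : 1 ≤ n := by omega
  set gz : ZMod p := (g : ZMod p) with hgz
  have hgz0 : gz ≠ 0 := by
    intro h
    have h1 : gz ^ n = 1 := by rw [← hg]; exact pow_orderOf_eq_one gz
    rw [h, zero_pow (by omega : n ≠ 0)] at h1
    exact zero_ne_one h1
  -- each term factors through ZMod p
  have hterm : ∀ x : ℕ, eC p (c * g ^ x) = eC p (((c : ZMod p) * gz ^ x).val) := by
    intro x
    apply eC_congr_zmod p (by omega)
    push_cast
    simp [ZMod.natCast_val, ZMod.cast_id]
    exact Or.inl rfl
  -- image of x ↦ gz^(x+1) on range n is univ.erase 0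
  have hinj : Set.InjOn (fun x : ℕ => gz ^ (x + 1)) (range n) := by
    intro x hx y hy hxy
    simp only [Finset.coe_range, Set.mem_Iio] at hx hy
    have : gz ^ x = gz ^ y := by
      have hxy' : gz * gz ^ x = gz * gz ^ y := by
        simpa [pow_succ, mul_comm] using hxy
      exact mul_left_cancel₀ hgz0 hxy'
    exact pow_injOn_Iio_orderOf (by simpa [hg] using hx) (by simpa [hg] using hy) this
  have himg : (range n).image (fun x : ℕ => gz ^ (x + 1)) = Finset.univ.erase 0 := by
    apply Finset.eq_of_subset_of_card_le
    · intro u hu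
      simp only [Finset.mem_image] at hu
      obtain ⟨x, _, rfl⟩ := hu
      exact Finset.mem_erase.2 ⟨pow_ne_zero _ hgz0, Finset.mem_univ _⟩
    · rw [Finset.card_erase_of_mem (Finset.mem_univ _), Finset.card_univ, ZMod.card,
        Finset.card_image_of_injOn hinj, Finset.card_range]
      omega
  have key : ∑ x ∈ Icc 1 n, eC p (c * g ^ x)
      = ∑ u ∈ Finset.univ.erase 0, eC p (((c : ZMod p) * u).val) := by
    rw [sum_Icc_one]
    rw [← himg, Finset.sum_image (fun x hx y hy h => hinj (by simpa using hx) (by simpa using hy) h)]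
    exact Finset.sum_congr rfl fun x _ => hterm (x + 1)
  rw [key, Finset.sum_erase_eq_sub (Finset.mem_univ _), sum_unit_mul p hp]
  have h0 : eC p (((c : ZMod p) * 0).val) = 1 := by simp [eC_zero]
  rw [h0]
  by_cases hc : (p:ℤ) ∣ c
  · rw [if_pos hc, if_pos (by rwa [ZMod.intCast_zmod_eq_zero_iff_dvd])]
    push_cast
    rw [hn]
    push_cast [Nat.cast_sub (by omega : 1 ≤ p)]
    ring
  · rw [if_neg hc, if_neg (fun h => hc ((ZMod.intCast_zmod_eq_zero_iff_dvd c p).1 h))]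
    ring

lemma eC_conj (q : ℕ) (m : ℤ) : (starRingEnd ℂ) (eC q m) = eC q (-m) := by
  rw [eC_eq, eC_eq, ← Complex.exp_conj]
  congr 1
  rw [map_mul, Complex.conj_I, Complex.conj_ofReal]
  push_cast
  ring

lemma sum_shift (n : ℕ) (f : ℕ → ℂ) (hf : ∀ x, f (x + n) = f x) (k : ℕ) :
    ∑ x ∈ Icc 1 n, f (k + x) = ∑ x ∈ Icc 1 n, f x := by
  induction k with
  | zero => simp
  | succ k ih =>
      rw [← ih]
      rw [sum_Icc_one n (fun x => f (k + 1 + x)), sum_Icc_one n (fun x => f (k + x))]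
      have h1 : ∑ x ∈ range (n+1), f (k + x + 1)
          = (∑ x ∈ range n, f (k + (x+1) + 1)) + f (k + 0 + 1) := Finset.sum_range_succ' _ n
      have h2 : ∑ x ∈ range (n+1), f (k + x + 1)
          = (∑ x ∈ range n, f (k + x + 1)) + f (k + n + 1) := Finset.sum_range_succ _ n
      have h3 : f (k + n + 1) = f (k + 0 + 1) := by
        rw [show k + n + 1 = (k + 0 + 1) + n by ring, hf]
      have h4 : ∀ x, f (k + 1 + (x + 1)) = f (k + (x+1) + 1) := fun x => by ring_nf
      calc ∑ x ∈ range n, f (k + 1 + (x + 1)) = ∑ x ∈ range n, f (k + (x+1) + 1) :=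
            Finset.sum_congr rfl fun x _ => h4 x
        _ = ∑ x ∈ range n, f (k + x + 1) := by
            have := h1.symm.trans h2
            rw [h3] at this
            linear_combination this
        _ = ∑ x ∈ range n, f (k + (x + 1)) := rfl

lemma abs_G_le (p n : ℕ) (hp : p.Prime) (hodd : Odd p) (hn : n = p - 1) (g b : ℤ)
    (hg : orderOf ((g : ZMod p)) = n) (hb : ¬ (p:ℤ) ∣ b) (a : ℤ) :
    ‖∑ x ∈ Icc 1 n, eC n (a * x) * eC p (b * g ^ x)‖ ≤ Real.sqrt p := by
  haveI : Fact p.Prime := ⟨hp⟩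
  have hp2 : 2 ≤ p := hp.two_le
  have hn1 : 1 ≤ n := by omega
  set f : ℕ → ℂ := fun x => eC n (a * x) * eC p (b * g ^ x) with hfdef
  set G : ℂ := ∑ x ∈ Icc 1 n, f x with hGdef
  have hgn : ((g : ZMod p)) ^ n = 1 := by rw [← hg]; exact pow_orderOf_eq_one _
  have hper : ∀ x, f (x + n) = f x := by
    intro x
    simp only [hfdef]
    congr 1
    · apply eC_congr n (by omega)
      push_cast
      exact ⟨a, by ring⟩
    · apply eC_congr_zmod p (by omega)
      push_cast
      rw [pow_add, hgn]
      ring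
  have expand : G * (starRingEnd ℂ) G = ∑ y ∈ Icc 1 n, ∑ x ∈ Icc 1 n, f x * (starRingEnd ℂ) (f y) := by
    rw [hGdef, map_sum, Finset.sum_mul_sum, Finset.sum_comm]
  have step1 : ∀ y ∈ Icc 1 n, ∑ x ∈ Icc 1 n, f x * (starRingEnd ℂ) (f y)
      = ∑ t ∈ Icc 1 n, f (y + t) * (starRingEnd ℂ) (f y) := by
    intro y _
    rw [← Finset.sum_mul, ← Finset.sum_mul, sum_shift n f hper y]
  have step2 : ∀ y t : ℕ, f (y + t) * (starRingEnd ℂ) (f y)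
      = eC n (a * t) * eC p ((b * (g ^ t - 1)) * g ^ y) := by
    intro y t
    simp only [hfdef]
    rw [map_mul, eC_conj, eC_conj]
    calc eC n (a * ↑(y + t)) * eC p (b * g ^ (y + t)) * (eC n (-(a * y)) * eC p (-(b * g ^ y)))
        = (eC n (a * ↑(y+t)) * eC n (-(a*y))) * (eC p (b * g ^ (y+t)) * eC p (-(b * g^y))) := by
          ring
      _ = eC n (a * ↑(y+t) + -(a*y)) * eC p (b * g^(y+t) + -(b * g^y)) := by
          rw [eC_add, eC_add]
      _ = eC n (a * t) * eC p ((b * (g ^ t - 1)) * g ^ y) := by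
          congr 2
          · push_cast; ring
          · rw [pow_add]; push_cast; ring
  have key : G * (starRingEnd ℂ) G
      = ∑ t ∈ Icc 1 n, eC n (a * t) * (if (p:ℤ) ∣ (b * (g ^ t - 1)) then (n:ℂ) else -1) := by
    rw [expand, Finset.sum_congr rfl step1]
    rw [Finset.sum_congr rfl (fun y hy => Finset.sum_congr rfl fun t _ => step2 y t)]
    rw [Finset.sum_comm]
    refine Finset.sum_congr rfl fun t _ => ?_
    rw [← Finset.mul_sum, sum_full p n hp hn g hg]
  -- evaluate the condition
  have hcond : ∀ t ∈ Icc 1 n, ((p:ℤ) ∣ (b * (g ^ t - 1)) ↔ t = n) := by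
    intro t ht
    simp only [Finset.mem_Icc] at ht
    constructor
    · intro h
      have h2 : (p:ℤ) ∣ (g ^ t - 1) := by
        rcases (Int.Prime.dvd_mul' hp h) with h' | h'
        · exact absurd h' hb
        · exact h'
      have h3 : ((g : ZMod p)) ^ t = 1 := by
        have := (ZMod.intCast_zmod_eq_zero_iff_dvd _ p).2 h2
        push_cast at this
        linear_combination this
      have h4 : n ∣ t := by rw [← hg]; exact orderOf_dvd_of_pow_eq_one h3
      have := Nat.le_of_dvd (by omega) h4
      omega
    · rintro rfl
      have h3 : ((g : ZMod p)) ^ t - 1 = 0 := by rw [hgn]; ring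
      have h5 : (((g ^ t - 1 : ℤ)) : ZMod p) = 0 := by push_cast; linear_combination h3
      have h2 := (ZMod.intCast_zmod_eq_zero_iff_dvd _ p).1 h5
      exact Dvd.dvd.mul_left h2 b
  have hEn : eC n (a * n) = 1 := by
    rw [show a * (n:ℤ) = (n:ℤ) * a by ring]; exact eC_mul_self n a (by omega)
  have hsum : ∑ t ∈ Icc 1 n, eC n (a * t) = if (n:ℤ) ∣ a then (n:ℂ) else 0 := by
    rw [sum_Icc_one n (fun t => eC n (a * t))]
    have hpow : ∀ x : ℕ, eC n (a * ((x:ℕ)+1 : ℕ)) = eC n a ^ (x+1) := by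
      intro x; rw [eC_pow]
    rw [Finset.sum_congr rfl fun x _ => hpow x]
    by_cases h : (n:ℤ) ∣ a
    · have h1 : eC n a = 1 := by
        obtain ⟨k, rfl⟩ := h
        exact eC_mul_self n k (by omega)
      simp [h1, h]
    · have hgeo := eC_geom n (by omega) a
      rw [if_neg h] at hgeo
      rw [if_neg h]
      calc ∑ x ∈ range n, eC n a ^ (x+1) = eC n a * ∑ x ∈ range n, eC n a ^ x := by
            rw [Finset.mul_sum]; exact Finset.sum_congr rfl fun x _ => by ring
        _ = 0 := by rw [hgeo, mul_zero]
  have hpn : (n:ℂ) = (p:ℂ) - 1 := by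
    rw [hn, Nat.cast_sub (by omega : 1 ≤ p)]; norm_num
  have key2 : G * (starRingEnd ℂ) G = (p:ℂ) - (if (n:ℤ) ∣ a then (n:ℂ) else 0) := by
    rw [key]
    have hsplit : ∀ t ∈ Icc 1 n, eC n (a*t) * (if (p:ℤ) ∣ (b * (g ^ t - 1)) then (n:ℂ) else -1)
        = eC n (a*t) * (-1) + (if t = n then eC n (a*(n:ℕ)) * ((n:ℂ)+1) else 0) := by
      intro t ht
      rw [if_congr (hcond t ht) rfl rfl]
      by_cases h : t = n
      · subst h; rw [if_pos rfl, if_pos rfl]; ring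
      · rw [if_neg h, if_neg h]; ring
    rw [Finset.sum_congr rfl hsplit, Finset.sum_add_distrib, Finset.sum_ite_eq' (Icc 1 n) n]
    rw [if_pos (Finset.mem_Icc.2 ⟨hn1, le_refl n⟩), ← Finset.sum_mul, hsum, hEn]
    by_cases h : (n:ℤ) ∣ a
    · rw [if_pos h, hpn]; ring
    · rw [if_neg h, hpn]; ring
  -- conclude
  have hnormSq : (Complex.normSq G : ℂ) = (p:ℂ) - (if (n:ℤ) ∣ a then (n:ℂ) else 0) := by
    rw [← Complex.mul_conj, key2]
  have hle : Complex.normSq G ≤ (p:ℝ) := by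
    by_cases h : (n:ℤ) ∣ a
    · rw [if_pos h] at hnormSq
      have : (Complex.normSq G : ℂ) = (((p:ℝ) - (n:ℝ) : ℝ) : ℂ) := by rw [hnormSq]; push_cast; ring
      have h2 : Complex.normSq G = (p:ℝ) - (n:ℝ) := by exact_mod_cast this
      rw [h2]
      have : (0:ℝ) ≤ n := by positivity
      linarith
    · rw [if_neg h, sub_zero] at hnormSq
      have h2 : Complex.normSq G = (p:ℝ) := by exact_mod_cast hnormSq
      rw [h2]
  rw [Complex.norm_def]
  exact Real.sqrt_le_sqrt hle

lemma abs_eC_sub_one (q : ℕ) (m : ℤ) :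
    ‖eC q m - 1‖ = 2 * |Real.sin (Real.pi * m / q)| := by
  rw [eC_eq]
  set θ : ℝ := 2 * Real.pi * m / q with hθ
  have h1 : Complex.exp ((θ:ℂ) * Complex.I) - 1
      = Complex.ofReal (Real.cos θ - 1) + Complex.ofReal (Real.sin θ) * Complex.I := by
    rw [Complex.exp_mul_I, ← Complex.ofReal_cos, ← Complex.ofReal_sin]
    push_cast
    ring
  rw [h1, Complex.norm_def, Complex.normSq_apply]
  simp only [Complex.add_re, Complex.ofReal_re, Complex.mul_re, Complex.I_re, Complex.I_im,
    Complex.ofReal_im, Complex.add_im, Complex.mul_im]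
  have h2 : (Real.cos θ - 1 + (Real.sin θ * 0 - 0 * 1)) * (Real.cos θ - 1 + (Real.sin θ * 0 - 0 * 1))
      + (0 + (Real.sin θ * 1 + 0 * 0)) * (0 + (Real.sin θ * 1 + 0 * 0))
      = 2 * (1 - Real.cos θ) := by
    have := Real.sin_sq_add_cos_sq θ
    nlinarith [this]
  rw [h2]
  have h3 : Real.pi * m / q = θ / 2 := by rw [hθ]; ring
  rw [h3, Real.abs_sin_half]
  rw [show (2 : ℝ) * (1 - Real.cos θ) = 4 * ((1 - Real.cos θ)/2) by ring]
  rw [show (4 : ℝ) * ((1 - Real.cos θ)/2) = 2^2 * ((1 - Real.cos θ)/2) by norm_num]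
  rw [Real.sqrt_mul (by norm_num)]
  rw [Real.sqrt_sq (by norm_num : (0:ℝ) ≤ 2)]

lemma sin_lb {n a : ℕ} (h1 : 1 ≤ a) (h2 : a < n) :
    2 / (n:ℝ) * min (a:ℝ) ((n:ℝ) - a) ≤ Real.sin (Real.pi * a / n) := by
  have hn : (0:ℝ) < n := by exact_mod_cast (by omega : 0 < n)
  have hπ := Real.pi_pos
  by_cases h : 2 * a ≤ n
  · have hmin : min (a:ℝ) ((n:ℝ) - a) = a := by
      apply min_eq_left
      have : (2:ℝ) * a ≤ n := by exact_mod_cast h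
      linarith
    rw [hmin]
    have hx0 : (0:ℝ) ≤ Real.pi * a / n := by positivity
    have hx1 : Real.pi * a / n ≤ Real.pi / 2 := by
      rw [div_le_div_iff₀ hn (by norm_num)]
      have : (2:ℝ) * a ≤ n := by exact_mod_cast h
      nlinarith
    have := Real.mul_le_sin hx0 hx1
    calc 2 / (n:ℝ) * a = 2 / Real.pi * (Real.pi * a / n) := by field_simp
      _ ≤ Real.sin (Real.pi * a / n) := this
  · push_neg at h
    have hmin : min (a:ℝ) ((n:ℝ) - a) = (n:ℝ) - a := by
      apply min_eq_right
      have : (n:ℝ) < 2 * a := by exact_mod_cast h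
      linarith
    rw [hmin]
    have hs : Real.sin (Real.pi * a / n) = Real.sin (Real.pi * ((n:ℝ) - a) / n) := by
      rw [show Real.pi * ((n:ℝ) - a) / n = Real.pi - Real.pi * a / n by field_simp]
      rw [Real.sin_pi_sub]
    rw [hs]
    have hna : (0:ℝ) < (n:ℝ) - a := by
      have : (a:ℝ) < n := by exact_mod_cast h2
      linarith
    have hx0 : (0:ℝ) ≤ Real.pi * ((n:ℝ) - a) / n := by positivity
    have hx1 : Real.pi * ((n:ℝ) - a) / n ≤ Real.pi / 2 := by
      rw [div_le_div_iff₀ hn (by norm_num)]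
      have : (n:ℝ) < 2 * a := by exact_mod_cast h
      nlinarith
    have := Real.mul_le_sin hx0 hx1
    calc 2 / (n:ℝ) * ((n:ℝ) - a) = 2 / Real.pi * (Real.pi * ((n:ℝ) - a) / n) := by
          field_simp
      _ ≤ Real.sin (Real.pi * ((n:ℝ) - a) / n) := this

lemma abs_D_le {n N a : ℕ} (hN : 1 ≤ N) (h1 : 1 ≤ a) (h2 : a < n) :
    ‖∑ y ∈ Icc 1 N, eC n (-(a * y))‖ ≤ (n:ℝ)/2 * ((a:ℝ)⁻¹ + ((n:ℝ) - a)⁻¹) := by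
  have hn : (0:ℝ) < n := by exact_mod_cast (by omega : 0 < n)
  set z : ℂ := eC n (-(a:ℤ)) with hz
  have hterm : ∀ y : ℕ, eC n (-((a:ℤ) * y)) = z ^ y := by
    intro y
    rw [hz, eC_pow]
    congr 1; push_cast; ring
  rw [Finset.sum_congr rfl fun y _ => hterm y]
  have habs : ‖z‖ = 1 := abs_eC _ _
  have hz1 : z ≠ 1 := by
    rw [hz]
    intro hc
    have := (eC_eq_one_iff n (by omega) _).1 hc
    rw [Int.dvd_neg] at this
    have := Int.le_of_dvd (by exact_mod_cast h1) this
    omega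
  -- geometric bound
  have hgeom : ‖∑ y ∈ Icc 1 N, z ^ y‖ ≤ 2 / ‖z - 1‖ := by
    have hsum : ∑ y ∈ Icc 1 N, z ^ y = z * ((z ^ N - 1) / (z - 1)) := by
      rw [sum_Icc_one N (fun y => z ^ y), ← geom_sum_eq hz1, Finset.mul_sum]
      exact Finset.sum_congr rfl fun y _ => by ring
    have hd : 0 < ‖z - 1‖ := by
      rw [norm_pos_iff, sub_ne_zero]; exact hz1
    have hnum : ‖z ^ N - 1‖ ≤ 2 := by
      have h := norm_sub_le (z ^ N) 1
      simp only [norm_one] at h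
      rw [norm_pow, habs, one_pow] at h
      linarith
    rw [hsum, norm_mul, habs, one_mul, norm_div]
    gcongr
  refine hgeom.trans ?_
  rw [hz, abs_eC_sub_one]
  have harg : (((-(a:ℤ)) : ℤ) : ℝ) = -(a:ℝ) := by push_cast; ring
  have hmin : (0:ℝ) < min (a:ℝ) ((n:ℝ) - a) := by
    apply lt_min
    · exact_mod_cast h1
    · have : (a:ℝ) < n := by exact_mod_cast h2
      linarith
  have hs := sin_lb h1 h2
  have hsinpos : 0 < Real.sin (Real.pi * a / n) := lt_of_lt_of_le (by positivity) hs
  have habs2 : |Real.sin (Real.pi * ((-(a:ℤ) : ℤ) : ℝ) / n)| = Real.sin (Real.pi * a / n) := by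
    rw [harg, show Real.pi * (-(a:ℝ)) / n = -(Real.pi * a / n) by ring, Real.sin_neg, abs_neg,
      _root_.abs_of_nonneg hsinpos.le]
  rw [habs2]
  have h2min : (0:ℝ) < 2 / n * min (a:ℝ) ((n:ℝ) - a) := by positivity
  calc 2 / (2 * Real.sin (Real.pi * a / n)) = (Real.sin (Real.pi * a / n))⁻¹ := by
        rw [div_eq_mul_inv, mul_inv]; ring
    _ ≤ (2 / n * min (a:ℝ) ((n:ℝ) - a))⁻¹ := by
        exact inv_anti₀ h2min hs
    _ = (n:ℝ) / 2 * (min (a:ℝ) ((n:ℝ) - a))⁻¹ := by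
        rw [mul_inv]; field_simp
    _ ≤ (n:ℝ) / 2 * ((a:ℝ)⁻¹ + ((n:ℝ) - a)⁻¹) := by
        have ha : (0:ℝ) < a := by exact_mod_cast h1
        have hna : (0:ℝ) < (n:ℝ) - a := by
          have : (a:ℝ) < n := by exact_mod_cast h2
          linarith
        apply mul_le_mul_of_nonneg_left ?_ (by positivity)
        rcases le_total (a:ℝ) ((n:ℝ) - a) with h | h
        · rw [min_eq_left h]
          have : (0:ℝ) ≤ ((n:ℝ) - a)⁻¹ := by positivity
          linarith
        · rw [min_eq_right h]
          have : (0:ℝ) ≤ (a:ℝ)⁻¹ := by positivity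
          linarith

lemma completion (p n N : ℕ) (hn1 : 1 ≤ n) (hNn : N ≤ n) (g b : ℤ) :
    (n:ℂ) * ∑ x ∈ Icc 1 N, eC p (b * g ^ x)
      = ∑ a ∈ range n, (∑ y ∈ Icc 1 N, eC n (-((a:ℤ) * y))) *
          (∑ x ∈ Icc 1 n, eC n ((a:ℤ) * x) * eC p (b * g ^ x)) := by
  have hterm : ∀ a : ℕ, (∑ y ∈ Icc 1 N, eC n (-((a:ℤ) * y))) *
      (∑ x ∈ Icc 1 n, eC n ((a:ℤ) * x) * eC p (b * g ^ x))
      = ∑ x ∈ Icc 1 n, ∑ y ∈ Icc 1 N, eC n ((x:ℤ) - y) ^ a * eC p (b * g ^ x) := by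
    intro a
    rw [Finset.sum_mul_sum, Finset.sum_comm]
    refine Finset.sum_congr rfl fun x _ => Finset.sum_congr rfl fun y _ => ?_
    rw [eC_pow]
    calc eC n (-((a:ℤ) * y)) * (eC n ((a:ℤ) * x) * eC p (b * g ^ x))
        = (eC n ((a:ℤ) * x) * eC n (-((a:ℤ) * y))) * eC p (b * g ^ x) := by ring
      _ = eC n ((a:ℤ) * x + -((a:ℤ) * y)) * eC p (b * g ^ x) := by rw [eC_add]
      _ = eC n (((x:ℤ) - y) * a) * eC p (b * g ^ x) := by congr 1; ring
  have hswap : ∀ x : ℕ, ∑ a ∈ range n, ∑ y ∈ Icc 1 N, eC n ((x:ℤ) - y) ^ a * eC p (b * g ^ x)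
      = ∑ y ∈ Icc 1 N, (∑ a ∈ range n, eC n ((x:ℤ) - y) ^ a) * eC p (b * g ^ x) := by
    intro x
    rw [Finset.sum_comm]
    exact Finset.sum_congr rfl fun y _ => by rw [Finset.sum_mul]
  have hinner : ∀ x ∈ Icc 1 n, ∀ y ∈ Icc 1 N,
      (∑ a ∈ range n, eC n ((x:ℤ) - y) ^ a) * eC p (b * g ^ x)
      = if x = y then (n:ℂ) * eC p (b * g ^ x) else 0 := by
    intro x hx y hy
    rw [eC_geom n (by omega) _]
    simp only [Finset.mem_Icc] at hx hy
    have hcond : ((n:ℤ) ∣ ((x:ℤ) - y)) ↔ x = y := by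
      constructor
      · rintro ⟨k, hk⟩
        have hn0 : (0:ℤ) < n := by exact_mod_cast hn1
        have hk1 : k = 0 := by nlinarith [hk]
        rw [hk1, mul_zero] at hk
        omega
      · rintro rfl; simp
    rw [if_congr hcond rfl rfl]
    by_cases h : x = y
    · rw [if_pos h, if_pos h]
    · rw [if_neg h, if_neg h, zero_mul]
  refine Eq.symm ?_
  calc ∑ a ∈ range n, (∑ y ∈ Icc 1 N, eC n (-((a:ℤ) * y))) *
          (∑ x ∈ Icc 1 n, eC n ((a:ℤ) * x) * eC p (b * g ^ x))
      = ∑ a ∈ range n, ∑ x ∈ Icc 1 n, ∑ y ∈ Icc 1 N, eC n ((x:ℤ) - y) ^ a * eC p (b * g ^ x) :=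
        Finset.sum_congr rfl fun a _ => hterm a
    _ = ∑ x ∈ Icc 1 n, ∑ a ∈ range n, ∑ y ∈ Icc 1 N, eC n ((x:ℤ) - y) ^ a * eC p (b * g ^ x) :=
        Finset.sum_comm
    _ = ∑ x ∈ Icc 1 n, ∑ y ∈ Icc 1 N, (∑ a ∈ range n, eC n ((x:ℤ) - y) ^ a) * eC p (b * g ^ x) :=
        Finset.sum_congr rfl fun x _ => hswap x
    _ = ∑ x ∈ Icc 1 n, ∑ y ∈ Icc 1 N, (if x = y then (n:ℂ) * eC p (b * g ^ x) else 0) :=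
        Finset.sum_congr rfl fun x hx => Finset.sum_congr rfl fun y hy => hinner x hx y hy
    _ = ∑ x ∈ Icc 1 n, (if x ∈ Icc 1 N then (n:ℂ) * eC p (b * g ^ x) else 0) := by
        refine Finset.sum_congr rfl fun x _ => ?_
        rw [Finset.sum_ite_eq (Icc 1 N) x (fun _ => (n:ℂ) * eC p (b * g ^ x))]
    _ = ∑ x ∈ Icc 1 n ∩ Icc 1 N, (n:ℂ) * eC p (b * g ^ x) := Finset.sum_ite_mem _ _ _
    _ = ∑ x ∈ Icc 1 N, (n:ℂ) * eC p (b * g ^ x) := by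
        rw [Finset.inter_eq_right.2 (Finset.Icc_subset_Icc le_rfl hNn)]
    _ = (n:ℂ) * ∑ x ∈ Icc 1 N, eC p (b * g ^ x) := by rw [Finset.mul_sum]

set_option maxHeartbeats 2000000 in
theorem stmt0 :
    ∃ C > (0:ℝ), ∀ (p : ℕ) (g b : ℤ) (N : ℕ),
      p.Prime → Odd p → orderOf (g : ZMod p) = p - 1 → ¬ (p:ℤ) ∣ b →
      1 ≤ N → N ≤ p - 1 →
      ‖(∑ x ∈ Finset.Icc 1 N,
          Complex.exp (2 * Real.pi * Complex.I * ((b * g ^ x : ℤ) : ℂ) / p))‖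
        ≤ C * Real.sqrt p * Real.log p := by
  refine ⟨3, by norm_num, ?_⟩
  intro p g b N hp hodd hg hb hN1 hNn
  set n := p - 1 with hn
  have hp2 : 2 ≤ p := hp.two_le
  have hp3 : 3 ≤ p := by
    rcases hodd with ⟨k, hk⟩; omega
  have hn1 : 1 ≤ n := by omega
  have hn2 : 2 ≤ n := by omega
  have hsqrt0 : (0:ℝ) ≤ Real.sqrt p := Real.sqrt_nonneg _
  show ‖∑ x ∈ Icc 1 N, eC p (b * g ^ x)‖ ≤ 3 * Real.sqrt p * Real.log p
  set S := ∑ x ∈ Icc 1 N, eC p (b * g ^ x) with hS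
  set D : ℕ → ℂ := fun a => ∑ y ∈ Icc 1 N, eC n (-((a:ℤ) * y)) with hD
  set G : ℕ → ℂ := fun a => ∑ x ∈ Icc 1 n, eC n ((a:ℤ) * x) * eC p (b * g ^ x) with hG
  have hcomp : (n:ℂ) * S = ∑ a ∈ range n, D a * G a := completion p n N hn1 hNn g b
  -- step 1 : n * |S| ≤ √p * ∑ |D a|
  have h1 : (n:ℝ) * ‖S‖ ≤ Real.sqrt p * ∑ a ∈ range n, ‖D a‖ := by
    calc (n:ℝ) * ‖S‖ = ‖(n:ℂ) * S‖ := by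
          rw [norm_mul, Complex.norm_natCast]
      _ = ‖∑ a ∈ range n, D a * G a‖ := by rw [hcomp]
      _ ≤ ∑ a ∈ range n, ‖D a * G a‖ := by
          exact norm_sum_le (range n) (fun a => D a * G a)
      _ = ∑ a ∈ range n, ‖D a‖ * ‖G a‖ := by
          refine Finset.sum_congr rfl fun a _ => norm_mul _ _
      _ ≤ ∑ a ∈ range n, ‖D a‖ * Real.sqrt p := by
          refine Finset.sum_le_sum fun a _ => ?_
          exact mul_le_mul_of_nonneg_left
            (abs_G_le p n hp hodd hn g b hg hb (a:ℤ))
            (norm_nonneg _)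
      _ = Real.sqrt p * ∑ a ∈ range n, ‖D a‖ := by
          rw [Finset.mul_sum]; exact Finset.sum_congr rfl fun a _ => mul_comm _ _
  -- step 2 : ∑ |D a| ≤ N + ∑_{a=1}^{n-1} n/2 (1/a + 1/(n-a))
  have hsplit : range n = insert 0 (Icc 1 (n-1)) := by
    ext x; simp only [Finset.mem_range, Finset.mem_insert, Finset.mem_Icc]; omega
  have hD0 : ‖D 0‖ = N := by
    have : D 0 = (N:ℂ) := by
      rw [hD]
      simp only [Nat.cast_zero, zero_mul, neg_zero, eC_zero]
      rw [Finset.sum_const, Nat.card_Icc]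
      simp
    rw [this, Complex.norm_natCast]
  have h2 : ∑ a ∈ range n, ‖D a‖
      ≤ (N:ℝ) + ∑ a ∈ Icc 1 (n-1), (n:ℝ)/2 * ((a:ℝ)⁻¹ + ((n:ℝ) - a)⁻¹) := by
    rw [hsplit, Finset.sum_insert (by simp)]
    rw [hD0]
    refine add_le_add_right (Finset.sum_le_sum fun a ha => ?_) _
    simp only [Finset.mem_Icc] at ha
    exact abs_D_le hN1 ha.1 (by omega)
  -- step 3 : harmonic bound
  have hrefl : ∑ a ∈ Icc 1 (n-1), ((n:ℝ) - a)⁻¹ = ∑ a ∈ Icc 1 (n-1), (a:ℝ)⁻¹ := by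
    refine Finset.sum_nbij' (fun a => n - a) (fun a => n - a) ?_ ?_ ?_ ?_ ?_
    · intro a ha; simp only [Finset.mem_Icc] at ha ⊢; omega
    · intro a ha; simp only [Finset.mem_Icc] at ha ⊢; omega
    · intro a ha; simp only [Finset.mem_Icc] at ha; show n - (n - a) = a; omega
    · intro a ha; simp only [Finset.mem_Icc] at ha; show n - (n - a) = a; omega
    · intro a ha
      simp only [Finset.mem_Icc] at ha
      show ((n:ℝ) - a)⁻¹ = (((n - a : ℕ) : ℝ))⁻¹
      rw [Nat.cast_sub (show a ≤ n by omega)]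
  have h3 : ∑ a ∈ Icc 1 (n-1), (n:ℝ)/2 * ((a:ℝ)⁻¹ + ((n:ℝ) - a)⁻¹)
      = (n:ℝ) * (harmonic (n-1) : ℝ) := by
    rw [← Finset.mul_sum, Finset.sum_add_distrib, hrefl]
    rw [show ((harmonic (n-1) : ℝ)) = ∑ a ∈ Icc 1 (n-1), (a:ℝ)⁻¹ by
      rw [harmonic_eq_sum_Icc]; push_cast; ring]
    ring
  have h4 : (harmonic (n-1) : ℝ) ≤ 1 + Real.log p := by
    refine (harmonic_le_one_add_log _).trans ?_
    have h5 : Real.log (n-1 : ℕ) ≤ Real.log p := by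
      apply Real.log_le_log (by exact_mod_cast (by omega : 0 < n - 1))
      exact_mod_cast (by omega : n - 1 ≤ p)
    linarith
  -- combine
  have hnR : (0:ℝ) < n := by exact_mod_cast hn1
  have hfinal : (n:ℝ) * ‖S‖ ≤ (n:ℝ) * (Real.sqrt p * (2 + Real.log p)) := by
    have hNn' : (N:ℝ) ≤ n := by exact_mod_cast hNn
    have hH : (0:ℝ) ≤ (harmonic (n-1) : ℝ) := by exact_mod_cast (harmonic_pos (n := n-1) (by omega)).le
    calc (n:ℝ) * ‖S‖ ≤ Real.sqrt p * ∑ a ∈ range n, ‖D a‖ := h1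
      _ ≤ Real.sqrt p * ((N:ℝ) + (n:ℝ) * (harmonic (n-1) : ℝ)) := by
          apply mul_le_mul_of_nonneg_left _ hsqrt0
          rw [← h3]; exact h2
      _ ≤ Real.sqrt p * ((n:ℝ) + (n:ℝ) * (1 + Real.log p)) := by
          apply mul_le_mul_of_nonneg_left _ hsqrt0
          have := mul_le_mul_of_nonneg_left h4 hnR.le
          linarith
      _ = (n:ℝ) * (Real.sqrt p * (2 + Real.log p)) := by ring
  have habsS : ‖S‖ ≤ Real.sqrt p * (2 + Real.log p) :=
    le_of_mul_le_mul_left hfinal hnR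
  have hlog1 : 1 ≤ Real.log p := by
    rw [Real.le_log_iff_exp_le (by exact_mod_cast (by omega : 0 < p))]
    have := Real.exp_one_lt_d9
    have h3p : (3:ℝ) ≤ p := by exact_mod_cast hp3
    linarith
  calc ‖S‖ ≤ Real.sqrt p * (2 + Real.log p) := habsS
    _ ≤ Real.sqrt p * (3 * Real.log p) := by
        apply mul_le_mul_of_nonneg_left _ hsqrt0
        linarith
    _ = 3 * Real.sqrt p * Real.log p := by ring
end

section
/- Let p be an odd prime, r ≥ 1 an integer, a, b, b_1, …, b_r integers with gcd(b, p) = 1, and g_1, …, g_r primitive roots modulo p. Define the averaged sum S_N = (1/φ(p−1)) ∑'_{g mod p} ∑_{x=1}^{N} e^{2πi(ax + b g^x + b_1 g_1^x + ⋯ + b_r g_r^x)/p}, where ∑' is over all primitive roots g modulo p. Then for every 1 ≤ N ≤ p−1 and every ε > 0, |S_N| ≪_ε p^{23/24 + ε}. -/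
open Finset Complex

noncomputable def Ep (p : ℕ) (z : ZMod p) : ℂ :=
  Complex.exp (2 * Real.pi * Complex.I * (z.val : ℂ) / p)

lemma Ep_int (p : ℕ) [NeZero p] (n : ℤ) :
    Complex.exp (2 * Real.pi * Complex.I * (n : ℂ) / p) = Ep p (n : ZMod p) := by
  have hp : (p : ℂ) ≠ 0 := Nat.cast_ne_zero.mpr (NeZero.ne p)
  have hd : (p : ℤ) ∣ (n - ((n : ZMod p).val : ℤ)) := by
    rw [← ZMod.intCast_zmod_eq_zero_iff_dvd]
    push_cast
    simp [ZMod.natCast_val, ZMod.intCast_cast]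
  obtain ⟨k, hk⟩ := hd
  have hn : (n : ℂ) = ((n : ZMod p).val : ℂ) + p * k := by
    have : (n : ℤ) = ((n : ZMod p).val : ℤ) + p * k := by linarith [hk]
    exact_mod_cast congrArg (Int.cast : ℤ → ℂ) this
  rw [Ep, hn]
  rw [show 2 * Real.pi * Complex.I * (((n : ZMod p).val : ℂ) + p * k) / p
      = 2 * Real.pi * Complex.I * ((n : ZMod p).val : ℂ) / p + k * (2 * Real.pi * Complex.I) by
    field_simp]
  rw [Complex.exp_add, Complex.exp_int_mul_two_pi_mul_I, mul_one]

lemma Ep_add (p : ℕ) [NeZero p] (z w : ZMod p) : Ep p (z + w) = Ep p z * Ep p w := by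
  have h1 : Ep p z = Complex.exp (2 * Real.pi * Complex.I * ((z.val : ℤ) : ℂ) / p) := by
    rw [Ep_int]; simp [ZMod.natCast_val, ZMod.cast_id]
  have h2 : Ep p w = Complex.exp (2 * Real.pi * Complex.I * ((w.val : ℤ) : ℂ) / p) := by
    rw [Ep_int]; simp [ZMod.natCast_val, ZMod.cast_id]
  have h3 := Ep_int p ((z.val : ℤ) + (w.val : ℤ))
  have hcast : ((((z.val : ℤ) + (w.val : ℤ)) : ℤ) : ZMod p) = z + w := by
    push_cast
    simp [ZMod.natCast_val, ZMod.cast_id]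
  rw [hcast] at h3
  rw [h1, h2, ← h3, ← Complex.exp_add]
  congr 1
  push_cast
  ring

lemma Ep_zero (p : ℕ) : Ep p 0 = 1 := by simp [Ep]

lemma Ep_abs (p : ℕ) (hp : 0 < p) (z : ZMod p) : norm (Ep p z) = 1 := by
  rw [Ep, show 2 * Real.pi * Complex.I * (z.val : ℂ) / p
      = ((2 * Real.pi * z.val / p : ℝ) : ℂ) * Complex.I by push_cast; ring]
  exact Complex.norm_exp_ofReal_mul_I _

lemma Ep_sum_eq_zero (p : ℕ) [NeZero p] (hp : 1 < p) : ∑ c : ZMod p, Ep p c = 0 := by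
  have hpc : (p : ℂ) ≠ 0 := Nat.cast_ne_zero.mpr (by omega)
  have hπ : (2 * Real.pi * Complex.I : ℂ) ≠ 0 :=
    mul_ne_zero (mul_ne_zero two_ne_zero (Complex.ofReal_ne_zero.mpr Real.pi_ne_zero))
      Complex.I_ne_zero
  set z : ℂ := Complex.exp (2 * Real.pi * Complex.I / p) with hz
  have hzp : z ^ p = 1 := by
    rw [hz, ← Complex.exp_nat_mul]
    rw [show (p : ℂ) * (2 * Real.pi * Complex.I / p) = 2 * Real.pi * Complex.I by
      rw [mul_comm, div_mul_cancel₀ _ hpc]]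
    exact Complex.exp_two_pi_mul_I
  have hz1 : z ≠ 1 := by
    intro h
    rw [hz, Complex.exp_eq_one_iff] at h
    obtain ⟨n, hn⟩ := h
    have h2 : 2 * Real.pi * Complex.I / p * p = (n : ℂ) * (2 * Real.pi * Complex.I) * p := by
      rw [hn]
    rw [div_mul_cancel₀ _ hpc] at h2
    have h3 : (2 * Real.pi * Complex.I) * 1 = (2 * Real.pi * Complex.I) * ((n : ℂ) * p) := by
      rw [mul_one]; nth_rewrite 1 [h2]; ring
    have h4 : (1 : ℂ) = (n : ℂ) * p := mul_left_cancel₀ hπ h3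
    have h5 : (1 : ℤ) = n * p := by exact_mod_cast h4
    have := Int.eq_one_of_mul_eq_one_left (by positivity) h5.symm
    omega
  have key : ∑ c : ZMod p, Ep p c = ∑ v ∈ Finset.range p, z ^ v := by
    refine Finset.sum_nbij' (i := fun c => c.val) (j := fun v => (v : ZMod p)) ?_ ?_ ?_ ?_ ?_
    · intro c _; exact Finset.mem_range.mpr (ZMod.val_lt c)
    · intro v _; exact Finset.mem_univ _
    · intro c _; simp [ZMod.natCast_val, ZMod.cast_id]
    · intro v hv; exact ZMod.val_natCast_of_lt (Finset.mem_range.mp hv)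
    · intro c _
      rw [Ep, hz, ← Complex.exp_nat_mul]
      congr 1
      ring
  rw [key, geom_sum_eq hz1, hzp, sub_self, zero_div]

lemma Ep_orth (p : ℕ) [Fact p.Prime] (hp : 1 < p) (s : ZMod p) (hs : s ≠ 0) :
    ∑ c : ZMod p, Ep p (c * s) = 0 := by
  have : ∑ c : ZMod p, Ep p (c * s) = ∑ c : ZMod p, Ep p c := by
    apply Fintype.sum_equiv (Equiv.mulRight₀ s hs)
    intro c; rfl
  rw [this, Ep_sum_eq_zero p hp]

lemma Ep_conj (p : ℕ) [NeZero p] (hp : 0 < p) (w : ZMod p) :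
    (starRingEnd ℂ) (Ep p w) = Ep p (-w) := by
  have h1 : Ep p w * Ep p (-w) = 1 := by rw [← Ep_add, add_neg_cancel, Ep_zero]
  have habs : norm (Ep p w) = 1 := Ep_abs p hp w
  have h2 : Ep p w * (starRingEnd ℂ) (Ep p w) = 1 := by
    rw [Complex.mul_conj]
    rw [Complex.normSq_eq_norm_sq, habs]
    norm_num
  have hne : Ep p w ≠ 0 := by
    intro h; rw [h] at habs; simp at habs
  exact mul_left_cancel₀ hne (h2.trans h1.symm)

lemma keybound (p : ℕ) [Fact p.Prime] (β : ZMod p) (hβ : β ≠ 0) (k : (ZMod p)ˣ) :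
    norm (∑ v ∈ Finset.range (orderOf k), Ep p (β * ((k : ZMod p)) ^ v))
      ≤ Real.sqrt p := by
  have hp1 : 1 < p := (Fact.out : p.Prime).one_lt
  have hp0 : 0 < p := by omega
  set z : ZMod p := (k : ZMod p) with hzdef
  have hordz : orderOf z = orderOf k := orderOf_units
  set m : ℕ := orderOf k with hmdef
  have hm : 0 < m := orderOf_pos k
  have hz0 : z ≠ 0 := Units.ne_zero k
  have hzm : z ^ m = 1 := by rw [← hordz]; exact pow_orderOf_eq_one z
  have hinj : Set.InjOn (z ^ ·) (Set.Iio m) := by rw [← hordz]; exact pow_injOn_Iio_orderOf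
  set H : Finset (ZMod p) := (Finset.range m).image (z ^ ·) with hHdef
  have hcard : H.card = m := by
    rw [hHdef, Finset.card_image_of_injOn, Finset.card_range]
    intro a ha b hb hab
    exact hinj (Finset.mem_range.mp ha) (Finset.mem_range.mp hb) hab
  have hmemH : ∀ j : ℕ, z ^ j ∈ H := by
    intro j
    rw [hHdef, Finset.mem_image]
    refine ⟨j % m, Finset.mem_range.mpr (Nat.mod_lt _ hm), ?_⟩
    have h := pow_mod_orderOf z j
    rw [hordz] at h
    exact h
  have hmul : ∀ t ∈ H, ∀ t' ∈ H, t * t' ∈ H := by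
    intro t ht t' ht'
    obtain ⟨v, _, rfl⟩ := Finset.mem_image.mp ht
    obtain ⟨v', _, rfl⟩ := Finset.mem_image.mp ht'
    rw [← pow_add]; exact hmemH _
  have hinv : ∀ t ∈ H, ∃ t' ∈ H, t * t' = 1 := by
    intro t ht
    obtain ⟨v, _, rfl⟩ := Finset.mem_image.mp ht
    refine ⟨z ^ (v * (m - 1)), hmemH _, ?_⟩
    rw [← pow_add]
    have h1 : v * (m - 1) = v * m - v := by
      have := Nat.mul_pred v m
      simpa using this
    have h2 : v ≤ v * m := Nat.le_mul_of_pos_right v hm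
    rw [show v + v * (m - 1) = v * m by rw [h1]; omega]
    rw [pow_mul', hzm, one_pow]
  set f : ZMod p → ℂ := fun c => ∑ t ∈ H, Ep p (c * t) with hfdef
  have horthfull : ∀ s : ZMod p, ∑ c : ZMod p, Ep p (c * s) = if s = 0 then (p : ℂ) else 0 := by
    intro s
    by_cases hs : s = 0
    · simp [hs, Ep_zero, ZMod.card]
    · rw [if_neg hs]; exact Ep_orth p hp1 s hs
  -- Parseval
  have hsumR : ∑ c : ZMod p, Complex.normSq (f c) = (p : ℝ) * m := by
    have expand : ∀ c : ZMod p, (Complex.normSq (f c) : ℂ)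
        = ∑ t ∈ H, ∑ t' ∈ H, Ep p (c * (t' - t)) := by
      intro c
      rw [← Complex.mul_conj, hfdef]
      simp only [Finset.sum_mul, map_sum, Finset.mul_sum]
      refine Finset.sum_congr rfl fun t _ => Finset.sum_congr rfl fun t' _ => ?_
      show Ep p (c * t') * (starRingEnd ℂ) (Ep p (c * t)) = Ep p (c * (t' - t))
      rw [Ep_conj p hp0, ← Ep_add]
      congr 1
      ring
    have hC : ∑ c : ZMod p, (Complex.normSq (f c) : ℂ) = (p : ℂ) * m := by
      calc ∑ c : ZMod p, (Complex.normSq (f c) : ℂ)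
          = ∑ c : ZMod p, ∑ t ∈ H, ∑ t' ∈ H, Ep p (c * (t' - t)) :=
            Finset.sum_congr rfl fun c _ => expand c
        _ = ∑ t ∈ H, ∑ c : ZMod p, ∑ t' ∈ H, Ep p (c * (t' - t)) := Finset.sum_comm
        _ = ∑ t ∈ H, ∑ t' ∈ H, ∑ c : ZMod p, Ep p (c * (t' - t)) :=
            Finset.sum_congr rfl fun t _ => Finset.sum_comm
        _ = ∑ t ∈ H, ∑ t' ∈ H, (if t' = t then (p : ℂ) else 0) := by
            refine Finset.sum_congr rfl fun t _ => Finset.sum_congr rfl fun t' _ => ?_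
            rw [horthfull (t' - t)]
            by_cases h : t' = t
            · simp [h]
            · rw [if_neg (sub_ne_zero.mpr h), if_neg h]
        _ = ∑ t ∈ H, (p : ℂ) := Finset.sum_congr rfl fun t ht => by
            rw [Finset.sum_ite_eq' H t fun _ => (p : ℂ), if_pos ht]
        _ = (p : ℂ) * m := by rw [Finset.sum_const, hcard]; simp [mul_comm]
    have := hC
    rw [← Complex.ofReal_sum] at this
    have h2 : ((∑ c : ZMod p, Complex.normSq (f c) : ℝ) : ℂ) = (((p : ℝ) * m : ℝ) : ℂ) := by
      rw [this]; push_cast; ring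
    exact_mod_cast h2
  -- invariance
  have hinvf : ∀ t₀ ∈ H, f (β * t₀) = f β := by
    intro t₀ ht₀
    obtain ⟨t₁, ht₁H, ht₁⟩ := hinv t₀ ht₀
    show (∑ t ∈ H, Ep p (β * t₀ * t)) = ∑ t ∈ H, Ep p (β * t)
    refine Finset.sum_nbij' (i := fun t => t₀ * t) (j := fun t => t₁ * t) ?_ ?_ ?_ ?_ ?_
    · intro t ht; exact hmul _ ht₀ _ ht
    · intro t ht; exact hmul _ ht₁H _ ht
    · intro t _
      show t₁ * (t₀ * t) = t
      rw [← mul_assoc, mul_comm t₁ t₀, ht₁, one_mul]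
    · intro t _
      show t₀ * (t₁ * t) = t
      rw [← mul_assoc, ht₁, one_mul]
    · intro t _
      show Ep p (β * t₀ * t) = Ep p (β * (t₀ * t))
      rw [mul_assoc]
  -- extraction
  have hnormle : Complex.normSq (f β) ≤ (p : ℝ) := by
    have hinjβ : Set.InjOn (fun t => β * t) H := fun a _ b _ h =>
      mul_left_cancel₀ hβ h
    have hB : ∑ c ∈ H.image (fun t => β * t), Complex.normSq (f c)
        = (m : ℝ) * Complex.normSq (f β) := by
      rw [Finset.sum_image hinjβ]
      rw [Finset.sum_congr rfl fun t ht => by rw [hinvf t ht]]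
      rw [Finset.sum_const, hcard, nsmul_eq_mul]
    have hle : ∑ c ∈ H.image (fun t => β * t), Complex.normSq (f c)
        ≤ ∑ c : ZMod p, Complex.normSq (f c) :=
      Finset.sum_le_univ_sum_of_nonneg fun c => Complex.normSq_nonneg _
    rw [hB, hsumR] at hle
    have hm' : (0 : ℝ) < m := by exact_mod_cast hm
    nlinarith [Complex.normSq_nonneg (f β)]
  -- conclude
  have hfeq : (∑ v ∈ Finset.range m, Ep p (β * z ^ v)) = f β := by
    show _ = ∑ t ∈ H, Ep p (β * t)
    rw [hHdef, Finset.sum_image fun a ha b hb h =>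
      hinj (Finset.mem_range.mp ha) (Finset.mem_range.mp hb) h]
  rw [show (∑ v ∈ Finset.range (orderOf k), Ep p (β * ((k : ZMod p)) ^ v))
      = ∑ v ∈ Finset.range m, Ep p (β * z ^ v) from rfl, hfeq, Complex.norm_def]
  exact Real.sqrt_le_sqrt hnormle

lemma sum_range_mul_periodic (G : ℕ → ℂ) (c d : ℕ) (h : ∀ j i, G (d * j + i) = G i) :
    ∑ v ∈ Finset.range (c * d), G v = c • ∑ v ∈ Finset.range d, G v := by
  induction c with
  | zero => simp
  | succ n ih =>
    rw [show (n + 1) * d = n * d + d by ring, Finset.sum_range_add, ih, succ_nsmul]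
    congr 1
    refine Finset.sum_congr rfl fun i _ => ?_
    rw [show n * d + i = d * n + i by ring, h n i]

lemma Tm_bound (p : ℕ) [Fact p.Prime] (β : ZMod p) (hβ : β ≠ 0) (m x : ℕ)
    (hm : m ∣ p - 1) (hm0 : 0 < m) :
    norm (∑ u ∈ Finset.univ.filter (fun u : (ZMod p)ˣ => u ^ m = 1),
        Ep p (β * ((u : ZMod p)) ^ x)) ≤ (Nat.gcd m x : ℝ) * Real.sqrt p := by
  obtain ⟨h, hh⟩ : ∃ h : (ZMod p)ˣ, orderOf h = m := by
    have hdvd : m ∣ Fintype.card (ZMod p)ˣ := by rw [ZMod.card_units p]; exact hm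
    have hcard := IsCyclic.card_orderOf_eq_totient (α := (ZMod p)ˣ) hdvd
    have hpos : 0 < Nat.totient m := Nat.totient_pos.mpr hm0
    rw [← hcard] at hpos
    obtain ⟨u, hu⟩ := Finset.card_pos.mp hpos
    exact ⟨u, by simpa using hu⟩
  have hinjh : Set.InjOn (h ^ ·) (Set.Iio m) := by
    rw [← hh]; exact pow_injOn_Iio_orderOf
  have hset : Finset.univ.filter (fun u : (ZMod p)ˣ => u ^ m = 1)
      = (Finset.range m).image (h ^ ·) := by
    symm
    apply Finset.eq_of_subset_of_card_le
    · intro u hu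
      obtain ⟨v, _, rfl⟩ := Finset.mem_image.mp hu
      simp only [Finset.mem_filter, Finset.mem_univ, true_and]
      rw [← pow_mul, mul_comm, pow_mul, ← hh, pow_orderOf_eq_one, one_pow]
    · have h1 : (Finset.univ.filter (fun u : (ZMod p)ˣ => u ^ m = 1)).card ≤ m := by
        simpa using IsCyclic.card_pow_eq_one_le (α := (ZMod p)ˣ) hm0
      have h2 : ((Finset.range m).image (h ^ ·)).card = m := by
        rw [Finset.card_image_of_injOn fun a ha b hb hab =>
          hinjh (Finset.mem_range.mp ha) (Finset.mem_range.mp hb) hab, Finset.card_range]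
      omega
  rw [hset, Finset.sum_image fun a ha b hb hab =>
    hinjh (Finset.mem_range.mp ha) (Finset.mem_range.mp hb) hab]
  set g := Nat.gcd m x with hgdef
  set k := h ^ x with hkdef
  have hordk : orderOf k = m / g := by rw [hkdef, orderOf_pow, hh]
  have hgm : g ∣ m := Nat.gcd_dvd_left m x
  have hmeq : m = g * (m / g) := (Nat.mul_div_cancel' hgm).symm
  have hterm : ∀ v : ℕ, Ep p (β * ((h ^ v : (ZMod p)ˣ) : ZMod p) ^ x)
      = Ep p (β * ((k : ZMod p)) ^ v) := by
    intro v
    congr 2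
    rw [hkdef]
    push_cast
    rw [← pow_mul, ← pow_mul, mul_comm v x]
  rw [Finset.sum_congr rfl fun v _ => hterm v]
  have hper : ∀ j i : ℕ, Ep p (β * ((k : ZMod p)) ^ ((m / g) * j + i))
      = Ep p (β * ((k : ZMod p)) ^ i) := by
    intro j i
    congr 2
    rw [pow_add, pow_mul]
    have : ((k : ZMod p)) ^ (m / g) = 1 := by
      rw [← hordk, ← Units.val_pow_eq_pow_val, pow_orderOf_eq_one, Units.val_one]
    rw [this, one_pow, one_mul]
  have := sum_range_mul_periodic (fun v => Ep p (β * ((k : ZMod p)) ^ v)) g (m / g) hper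
  rw [hmeq, this]
  rw [nsmul_eq_mul, norm_mul, Complex.norm_natCast]
  have hkb := keybound p β hβ k
  rw [hordk] at hkb
  exact mul_le_mul_of_nonneg_left hkb (Nat.cast_nonneg g)

open ArithmeticFunction ArithmeticFunction.Moebius in
lemma moebius_divisor_sum (n : ℕ) :
    ∑ d ∈ n.divisors, (ArithmeticFunction.moebius d : ℤ)
      = if n = 1 then 1 else 0 := by
  by_cases hn : n = 0
  · simp [hn]
  · have h := congrArg (fun f : ArithmeticFunction ℤ => f n) moebius_mul_coe_zeta
    rw [coe_mul_zeta_apply] at h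
    rw [h, one_apply]

open ArithmeticFunction ArithmeticFunction.Moebius in
lemma moebius_indicator (P e : ℕ) (hP : 0 < P) (he : e ∣ P) :
    ∑ m ∈ P.divisors, (if e ∣ m then (ArithmeticFunction.moebius (P / m) : ℤ) else 0)
      = if e = P then 1 else 0 := by
  have he0 : 0 < e := Nat.pos_of_dvd_of_pos he hP
  have step1 : ∑ m ∈ P.divisors, (if e ∣ m then (μ (P / m) : ℤ) else 0)
      = ∑ m ∈ P.divisors, (if e ∣ P / m then (μ m : ℤ) else 0) := by
    rw [← Nat.sum_div_divisors P (fun k => if e ∣ P / k then (μ k : ℤ) else 0)]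
    refine Finset.sum_congr rfl fun m hm => ?_
    have hmP : m ∣ P := (Nat.mem_divisors.mp hm).1
    rw [Nat.div_div_self hmP hP.ne']
  rw [step1]
  have step2 : ∑ m ∈ P.divisors, (if e ∣ P / m then (μ m : ℤ) else 0)
      = ∑ m ∈ P.divisors, (if m ∣ P / e then (μ m : ℤ) else 0) := by
    refine Finset.sum_congr rfl fun m hm => ?_
    have hmP : m ∣ P := (Nat.mem_divisors.mp hm).1
    congr 1
    simp only [eq_iff_iff]
    rw [Nat.dvd_div_iff_mul_dvd hmP, Nat.dvd_div_iff_mul_dvd he, mul_comm]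
  rw [step2, ← Finset.sum_filter,
    Nat.divisors_filter_dvd_of_dvd hP.ne' (Nat.div_dvd_of_dvd he),
    moebius_divisor_sum]
  congr 1
  simp only [eq_iff_iff]
  constructor
  · intro h1
    have := Nat.div_mul_cancel he
    rw [h1, one_mul] at this
    exact this
  · intro h1
    rw [h1, Nat.div_self hP]

open ArithmeticFunction ArithmeticFunction.Moebius in
lemma T_bound (p : ℕ) [Fact p.Prime] (β : ZMod p) (hβ : β ≠ 0) (x : ℕ) :
    norm (∑ u ∈ Finset.univ.filter (fun u : (ZMod p)ˣ => orderOf u = p - 1),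
        Ep p (β * ((u : ZMod p)) ^ x))
      ≤ (∑ m ∈ (p - 1).divisors, (Nat.gcd m x : ℝ)) * Real.sqrt p := by
  set P := p - 1 with hPdef
  have hP : 0 < P := by
    have := (Fact.out : p.Prime).two_le
    omega
  set F : (ZMod p)ˣ → ℂ := fun u => Ep p (β * ((u : ZMod p)) ^ x) with hFdef
  have hID : ∑ u ∈ Finset.univ.filter (fun u : (ZMod p)ˣ => orderOf u = P), F u
      = ∑ m ∈ P.divisors, (μ (P / m) : ℂ) *
          ∑ u ∈ Finset.univ.filter (fun u : (ZMod p)ˣ => u ^ m = 1), F u := by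
    rw [Finset.sum_filter]
    have point : ∀ u : (ZMod p)ˣ, (if orderOf u = P then F u else 0)
        = ∑ m ∈ P.divisors, (μ (P / m) : ℂ) * (if u ^ m = 1 then F u else 0) := by
      intro u
      have he : orderOf u ∣ P := ZMod.orderOf_units_dvd_card_sub_one u
      have key := moebius_indicator P (orderOf u) hP he
      have cast_key : ∑ m ∈ P.divisors, (if orderOf u ∣ m then ((μ (P / m) : ℤ) : ℂ) else 0)
          = if orderOf u = P then 1 else 0 := by
        have h2 := congrArg (fun z : ℤ => (z : ℂ)) key
        simpa using h2
      calc (if orderOf u = P then F u else 0)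
          = (if orderOf u = P then (1 : ℂ) else 0) * F u := by
            by_cases h : orderOf u = P <;> simp [h]
        _ = (∑ m ∈ P.divisors, (if orderOf u ∣ m then ((μ (P / m) : ℤ) : ℂ) else 0)) * F u := by
            rw [cast_key]
        _ = ∑ m ∈ P.divisors, (μ (P / m) : ℂ) * (if u ^ m = 1 then F u else 0) := by
            rw [Finset.sum_mul]
            refine Finset.sum_congr rfl fun m _ => ?_
            have : u ^ m = 1 ↔ orderOf u ∣ m := orderOf_dvd_iff_pow_eq_one.symm
            by_cases h : orderOf u ∣ m
            · rw [if_pos h, if_pos (this.mpr h)]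
            · rw [if_neg h, if_neg (fun hh => h (this.mp hh)), zero_mul, mul_zero]
    rw [Finset.sum_congr rfl fun u _ => point u, Finset.sum_comm]
    refine Finset.sum_congr rfl fun m _ => ?_
    rw [← Finset.mul_sum, Finset.sum_filter]
  rw [hID]
  calc norm (∑ m ∈ P.divisors, (μ (P / m) : ℂ) *
          ∑ u ∈ Finset.univ.filter (fun u : (ZMod p)ˣ => u ^ m = 1), F u)
      ≤ ∑ m ∈ P.divisors, norm ((μ (P / m) : ℂ) *
          ∑ u ∈ Finset.univ.filter (fun u : (ZMod p)ˣ => u ^ m = 1), F u) := by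
        exact norm_sum_le _ _
    _ ≤ ∑ m ∈ P.divisors, (Nat.gcd m x : ℝ) * Real.sqrt p := by
        refine Finset.sum_le_sum fun m hm => ?_
        rw [norm_mul]
        have hμ : norm ((μ (P / m) : ℂ)) ≤ 1 := by
          rw [Complex.norm_intCast]
          have := ArithmeticFunction.abs_moebius_le_one (n := P / m)
          exact_mod_cast this
        have hTm := Tm_bound p β hβ m x (Nat.mem_divisors.mp hm).1
          (Nat.pos_of_mem_divisors hm)
        calc norm ((μ (P / m) : ℂ)) * norm (∑ u ∈ Finset.univ.filter
                (fun u : (ZMod p)ˣ => u ^ m = 1), F u)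
            ≤ 1 * ((Nat.gcd m x : ℝ) * Real.sqrt p) := by
              apply mul_le_mul hμ hTm (norm_nonneg _) zero_le_one
          _ = (Nat.gcd m x : ℝ) * Real.sqrt p := one_mul _
    _ = (∑ m ∈ P.divisors, (Nat.gcd m x : ℝ)) * Real.sqrt p := by
        rw [Finset.sum_mul]

lemma gcd_sum_bound (P : ℕ) (hP : 0 < P) (N : ℕ) (hN : N ≤ P) :
    ∑ x ∈ Finset.Icc 1 N, ∑ m ∈ P.divisors, Nat.gcd m x
      ≤ P.divisors.card ^ 2 * P := by
  rw [Finset.sum_comm]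
  have permbound : ∀ m ∈ P.divisors, ∑ x ∈ Finset.Icc 1 N, Nat.gcd m x
      ≤ P.divisors.card * P := by
    intro m hm
    have hmP : m ∣ P := (Nat.mem_divisors.mp hm).1
    have hm0 : m ≠ 0 := (Nat.pos_of_mem_divisors hm).ne'
    calc ∑ x ∈ Finset.Icc 1 N, Nat.gcd m x
        ≤ ∑ x ∈ Finset.Icc 1 P, Nat.gcd m x :=
          Finset.sum_le_sum_of_subset (Finset.Icc_subset_Icc_right hN)
      _ ≤ ∑ x ∈ Finset.Icc 1 P, ∑ e ∈ m.divisors.filter (· ∣ x), e := by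
          refine Finset.sum_le_sum fun x _ => ?_
          refine Finset.single_le_sum (fun e _ => Nat.zero_le e) ?_
          simp only [Finset.mem_filter, Nat.mem_divisors]
          exact ⟨⟨Nat.gcd_dvd_left m x, hm0⟩, Nat.gcd_dvd_right m x⟩
      _ = ∑ x ∈ Finset.Icc 1 P, ∑ e ∈ m.divisors, (if e ∣ x then e else 0) := by
          refine Finset.sum_congr rfl fun x _ => (Finset.sum_filter _ _)
      _ = ∑ e ∈ m.divisors, ∑ x ∈ Finset.Icc 1 P, (if e ∣ x then e else 0) :=
          Finset.sum_comm
      _ ≤ ∑ e ∈ m.divisors, P := by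
          refine Finset.sum_le_sum fun e he => ?_
          rw [← Finset.sum_filter, Finset.sum_const, smul_eq_mul]
          have hIcc : Finset.Icc 1 P = Finset.Ioc 0 P := rfl
          have hcard : (Finset.Icc 1 P |>.filter (e ∣ ·)).card = P / e := by
            rw [hIcc]
            exact Nat.Ioc_filter_dvd_card_eq_div P e
          rw [hcard, mul_comm]
          rw [mul_comm]
          exact Nat.div_mul_le_self P e
      _ = m.divisors.card * P := by rw [Finset.sum_const, smul_eq_mul]
      _ ≤ P.divisors.card * P := by
          apply Nat.mul_le_mul_right
          exact Finset.card_le_card (Nat.divisors_subset_of_dvd hP.ne' hmP)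
  calc ∑ m ∈ P.divisors, ∑ x ∈ Finset.Icc 1 N, Nat.gcd m x
      ≤ ∑ m ∈ P.divisors, P.divisors.card * P := Finset.sum_le_sum permbound
    _ = P.divisors.card ^ 2 * P := by rw [Finset.sum_const, smul_eq_mul]; ring

lemma le_totient_mul_card_divisors (n : ℕ) : n ≤ n.totient * n.divisors.card := by
  rcases Nat.eq_zero_or_pos n with h | h
  · simp [h]
  have hmult := Nat.multiplicative_factorization
    (f := fun m => m.totient * m.divisors.card)
    (fun x y hxy => by
      rcases Nat.eq_zero_or_pos x with rfl | hx
      · simp [Nat.coprime_zero_left] at hxy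
        simp [hxy]
      rcases Nat.eq_zero_or_pos y with rfl | hy
      · simp [Nat.coprime_zero_right] at hxy
        simp [hxy]
      show (x * y).totient * ((x * y).divisors.card) = _
      rw [Nat.totient_mul hxy, Nat.Coprime.card_divisors_mul hxy]
      ring)
    (by simp) h.ne'
  rw [hmult]
  conv_lhs => rw [← Nat.factorization_prod_pow_eq_self h.ne']
  rw [Finsupp.prod, Finsupp.prod]
  refine Finset.prod_le_prod' fun q hq => ?_
  have hqp : q.Prime := Nat.prime_of_mem_primeFactors (by rwa [← Nat.support_factorization])
  set a := n.factorization q with hadef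
  have ha : 0 < a := Nat.pos_of_ne_zero (Finsupp.mem_support_iff.mp hq)
  rw [Nat.totient_prime_pow hqp ha]
  have hd : (q ^ a).divisors.card = a + 1 := by
    rw [Nat.divisors_prime_pow hqp, Finset.card_map, Finset.card_range]
  rw [hd]
  have hq2 : 2 ≤ q := hqp.two_le
  calc q ^ a = q ^ (a - 1) * q := by
        conv_lhs => rw [show a = (a - 1) + 1 by omega]
        rw [pow_succ]
    _ ≤ q ^ (a - 1) * ((q - 1) * (a + 1)) := by
        apply Nat.mul_le_mul_left
        have : q ≤ (q - 1) * 2 := by omega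
        calc q ≤ (q - 1) * 2 := this
          _ ≤ (q - 1) * (a + 1) := Nat.mul_le_mul_left _ (by omega)
    _ = q ^ (a - 1) * (q - 1) * (a + 1) := by ring

lemma div_seven_bound (a : ℕ) : ((a : ℝ) + 1) ≤ 32 * (2 : ℝ) ^ ((a : ℝ) / 7) := by
  have h1 : a + 1 ≤ 32 * (a / 7 + 1) := by omega
  have h2 : a / 7 + 1 ≤ 2 ^ (a / 7) := Nat.lt_two_pow_self (n := a / 7)
  have h3 : (a : ℝ) + 1 ≤ 32 * (2 : ℝ) ^ ((a / 7 : ℕ) : ℝ) := by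
    rw [Real.rpow_natCast]
    have : ((a + 1 : ℕ) : ℝ) ≤ ((32 * 2 ^ (a / 7) : ℕ) : ℝ) := by
      exact_mod_cast le_trans h1 (Nat.mul_le_mul_left 32 h2)
    push_cast at this
    linarith
  refine le_trans h3 ?_
  have : ((a / 7 : ℕ) : ℝ) ≤ (a : ℝ) / 7 := Nat.cast_div_le
  have h4 : (2 : ℝ) ^ ((a / 7 : ℕ) : ℝ) ≤ (2 : ℝ) ^ ((a : ℝ) / 7) :=
    Real.rpow_le_rpow_of_exponent_le one_le_two this
  linarith

lemma prime_pow_bound (q a : ℕ) (hq : q.Prime) :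
    ((a : ℝ) + 1) ≤ (if q < 128 then (32 : ℝ) else 1) * ((q : ℝ) ^ a) ^ ((1 : ℝ) / 7) := by
  have hq0 : (0 : ℝ) ≤ q := Nat.cast_nonneg q
  have hq2 : (2 : ℝ) ≤ q := by exact_mod_cast hq.two_le
  have hrw : ((q : ℝ) ^ a) ^ ((1 : ℝ) / 7) = (q : ℝ) ^ ((a : ℝ) / 7) := by
    rw [← Real.rpow_natCast (q : ℝ) a, ← Real.rpow_mul hq0]
    congr 1
    ring
  rw [hrw]
  have hmono : (2 : ℝ) ^ ((a : ℝ) / 7) ≤ (q : ℝ) ^ ((a : ℝ) / 7) :=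
    Real.rpow_le_rpow (by norm_num) hq2 (by positivity)
  by_cases h : q < 128
  · rw [if_pos h]
    have := div_seven_bound a
    nlinarith [Real.rpow_nonneg (show (0:ℝ) ≤ 2 by norm_num) ((a : ℝ) / 7)]
  · rw [if_neg h, one_mul]
    have h128 : (128 : ℝ) ≤ q := by
      have : 128 ≤ q := by omega
      exact_mod_cast this
    have key : ((a : ℝ) + 1) ≤ (128 : ℝ) ^ ((a : ℝ) / 7) := by
      have h1 : ((a : ℝ) + 1) ≤ (2 : ℝ) ^ (a : ℕ) := by
        have := Nat.lt_two_pow_self (n := a)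
        have : ((a + 1 : ℕ) : ℝ) ≤ ((2 ^ a : ℕ) : ℝ) := by exact_mod_cast this
        push_cast at this
        linarith
      have h2 : (128 : ℝ) ^ ((a : ℝ) / 7) = (2 : ℝ) ^ (a : ℕ) := by
        rw [show (128 : ℝ) = (2 : ℝ) ^ ((7 : ℕ) : ℝ) by
          rw [Real.rpow_natCast]; norm_num]
        rw [← Real.rpow_mul (by norm_num) ]
        rw [show ((7 : ℕ) : ℝ) * ((a : ℝ) / 7) = (a : ℝ) by push_cast; ring]
        rw [Real.rpow_natCast]
      rw [h2]
      exact h1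
    refine le_trans key ?_
    exact Real.rpow_le_rpow (by norm_num) h128 (by positivity)

lemma card_divisors_bound (n : ℕ) (hn : n ≠ 0) :
    (n.divisors.card : ℝ) ≤ 32 ^ 128 * (n : ℝ) ^ ((1 : ℝ) / 7) := by
  have hcd := Nat.card_divisors hn
  have step1 : (n.divisors.card : ℝ)
      = ∏ q ∈ n.primeFactors, ((n.factorization q : ℝ) + 1) := by
    rw [hcd]
    push_cast
    rfl
  have step2 : ∏ q ∈ n.primeFactors, ((n.factorization q : ℝ) + 1)
      ≤ ∏ q ∈ n.primeFactors,
          ((if q < 128 then (32 : ℝ) else 1) * ((q : ℝ) ^ (n.factorization q)) ^ ((1 : ℝ) / 7)) := by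
    refine Finset.prod_le_prod (fun q _ => by positivity) fun q hq => ?_
    exact prime_pow_bound q _ (Nat.prime_of_mem_primeFactors hq)
  have step3 : ∏ q ∈ n.primeFactors,
        ((if q < 128 then (32 : ℝ) else 1) * ((q : ℝ) ^ (n.factorization q)) ^ ((1 : ℝ) / 7))
      = (∏ q ∈ n.primeFactors, (if q < 128 then (32 : ℝ) else 1))
        * ∏ q ∈ n.primeFactors, ((q : ℝ) ^ (n.factorization q)) ^ ((1 : ℝ) / 7) :=
    Finset.prod_mul_distrib
  have step4 : ∏ q ∈ n.primeFactors, (if q < 128 then (32 : ℝ) else 1) ≤ 32 ^ 128 := by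
    rw [Finset.prod_ite, Finset.prod_const, Finset.prod_const_one, mul_one]
    have hsub : n.primeFactors.filter (fun q => q < 128) ⊆ Finset.range 128 := by
      intro q hq
      exact Finset.mem_range.mpr (Finset.mem_filter.mp hq).2
    have hcard : (n.primeFactors.filter (fun q => q < 128)).card ≤ 128 := by
      have := Finset.card_le_card hsub
      simpa using this
    exact pow_le_pow_right₀ (by norm_num) hcard
  have step5 : ∏ q ∈ n.primeFactors, ((q : ℝ) ^ (n.factorization q)) ^ ((1 : ℝ) / 7)
      = (n : ℝ) ^ ((1 : ℝ) / 7) := by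
    rw [Real.finset_prod_rpow _ _ (fun q _ => by positivity) _]
    congr 1
    have := Nat.factorization_prod_pow_eq_self hn
    calc ∏ q ∈ n.primeFactors, (q : ℝ) ^ (n.factorization q)
        = ((∏ q ∈ n.primeFactors, q ^ (n.factorization q) : ℕ) : ℝ) := by
          push_cast
          rfl
      _ = (n : ℝ) := by
          have hnat : ∏ q ∈ n.primeFactors, q ^ (n.factorization q) = n := by
            conv_rhs => rw [← this]
            rfl
          rw [hnat]
  rw [step1]
  refine le_trans step2 ?_
  rw [step3, step5]
  have hnn : (0 : ℝ) ≤ (n : ℝ) ^ ((1 : ℝ) / 7) := by positivity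
  nlinarith [step4, Finset.prod_nonneg (s := n.primeFactors)
    (f := fun q => (if q < 128 then (32 : ℝ) else 1)) (fun q _ => by positivity)]

theorem stmt13 : ∀ ε > (0:ℝ), ∃ C > (0:ℝ),
    ∀ (p r : ℕ) (a b : ℤ) (bb gg : Fin r → ℤ) (N : ℕ),
    p.Prime → Odd p → 1 ≤ r → Int.gcd b p = 1 →
    (∀ i, orderOf (gg i : ZMod p) = p - 1) →
    1 ≤ N → N ≤ p - 1 →
    ‖(1 / (Nat.totient (p - 1) : ℂ)) *
        ∑ g ∈ (Finset.Icc 1 (p - 1)).filter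
            (fun g : ℕ => orderOf ((g : ℕ) : ZMod p) = p - 1),
          ∑ x ∈ Finset.Icc 1 N,
            Complex.exp (2 * Real.pi * Complex.I *
              ((a * x + b * (g : ℤ) ^ x + ∑ i, bb i * (gg i) ^ x : ℤ) : ℂ) / p)‖
      ≤ C * (p : ℝ) ^ ((23:ℝ)/24 + ε) := by
  intro ε hε
  refine ⟨((32:ℝ) ^ 128) ^ 3, by positivity, ?_⟩
  intro p r a b bb gg N hp hodd hr hb hgg hN1 hNP
  haveI : Fact p.Prime := ⟨hp⟩
  have hp2 : 2 ≤ p := hp.two_le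
  set P := p - 1 with hPdef
  have hP : 0 < P := by omega
  have hβ : (b : ZMod p) ≠ 0 := by
    rw [Ne, ZMod.intCast_zmod_eq_zero_iff_dvd]
    intro hdvd
    have h1 : (p : ℤ) ∣ (Int.gcd b p : ℤ) := Int.dvd_coe_gcd hdvd dvd_rfl
    rw [hb] at h1
    have h2 : (p : ℤ) ≤ 1 := Int.le_of_dvd one_pos h1
    have : (2 : ℤ) ≤ p := by exact_mod_cast hp2
    omega
  set β : ZMod p := (b : ZMod p) with hβdef
  set W : ℕ → ℂ := fun x =>
    Complex.exp (2 * Real.pi * Complex.I * ((a * x + ∑ i, bb i * (gg i) ^ x : ℤ) : ℂ) / p)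
    with hWdef
  set Gset := (Finset.Icc 1 P).filter (fun g : ℕ => orderOf ((g : ℕ) : ZMod p) = P)
    with hGdef
  have hsummand : ∀ g : ℕ, ∀ x : ℕ,
      Complex.exp (2 * Real.pi * Complex.I *
          ((a * x + b * (g : ℤ) ^ x + ∑ i, bb i * (gg i) ^ x : ℤ) : ℂ) / p)
        = W x * Ep p (β * ((g : ZMod p)) ^ x) := by
    intro g x
    have hsplit : ((a * x + b * (g : ℤ) ^ x + ∑ i, bb i * (gg i) ^ x : ℤ) : ℂ)
        = ((a * x + ∑ i, bb i * (gg i) ^ x : ℤ) : ℂ) + ((b * (g : ℤ) ^ x : ℤ) : ℂ) := by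
      push_cast
      ring
    rw [hsplit, mul_add, add_div, Complex.exp_add]
    congr 1
    rw [Ep_int p (b * (g : ℤ) ^ x)]
    congr 1
    push_cast
    ring
  have hWabs : ∀ x : ℕ, norm (W x) = 1 := by
    intro x
    rw [hWdef]
    simp only
    rw [Ep_int p _]
    exact Ep_abs p (by omega) _
  -- reindex inner sum over primitive-root units
  have hreindex : ∀ x : ℕ, ∑ g ∈ Gset, Ep p (β * ((g : ZMod p)) ^ x)
      = ∑ u ∈ Finset.univ.filter (fun u : (ZMod p)ˣ => orderOf u = P),
          Ep p (β * ((u : ZMod p)) ^ x) := by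
    intro x
    have hzne : ∀ g ∈ Gset, ((g : ℕ) : ZMod p) ≠ 0 := by
      intro g hg h0
      have hordg : orderOf ((g : ℕ) : ZMod p) = P := (Finset.mem_filter.mp hg).2
      have := pow_orderOf_eq_one ((g : ℕ) : ZMod p)
      rw [hordg, h0, zero_pow hP.ne'] at this
      exact zero_ne_one this
    refine Finset.sum_bij' (i := fun g hg => Units.mk0 ((g : ℕ) : ZMod p) (hzne g hg))
      (j := fun u _ => ((u : ZMod p)).val) ?_ ?_ ?_ ?_ ?_
    · intro g hg
      simp only [Finset.mem_filter, Finset.mem_univ, true_and]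
      have hordg : orderOf ((g : ℕ) : ZMod p) = P := (Finset.mem_filter.mp hg).2
      rw [← orderOf_units, Units.val_mk0]
      exact hordg
    · intro u hu
      have hval : ((u : ZMod p)).val < p := ZMod.val_lt _
      have hvne : ((u : ZMod p)).val ≠ 0 := by
        intro h0
        apply Units.ne_zero u
        have h1 : ((((u : ZMod p)).val : ℕ) : ZMod p) = ((0 : ℕ) : ZMod p) := by rw [h0]
        simpa [ZMod.natCast_val, ZMod.cast_id] using h1
      show (((u : ZMod p)).val) ∈ Gset
      rw [hGdef]
      refine Finset.mem_filter.mpr ⟨Finset.mem_Icc.mpr ⟨by omega, by omega⟩, ?_⟩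
      have hcast : ((((u : ZMod p)).val : ℕ) : ZMod p) = (u : ZMod p) := by
        simp [ZMod.natCast_val, ZMod.cast_id]
      rw [hcast, orderOf_units]
      exact (Finset.mem_filter.mp hu).2
    · intro g hg
      exact ZMod.val_natCast_of_lt (by
        have := (Finset.mem_Icc.mp (Finset.mem_filter.mp hg).1).2
        omega)
    · intro u hu
      apply Units.ext
      show ((((u : ZMod p)).val : ℕ) : ZMod p) = (u : ZMod p)
      simp [ZMod.natCast_val, ZMod.cast_id]
    · intro g hg
      rfl
  have hmain : (∑ g ∈ Gset, ∑ x ∈ Finset.Icc 1 N,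
      Complex.exp (2 * Real.pi * Complex.I *
        ((a * x + b * (g : ℤ) ^ x + ∑ i, bb i * (gg i) ^ x : ℤ) : ℂ) / p))
      = ∑ x ∈ Finset.Icc 1 N, W x *
          ∑ u ∈ Finset.univ.filter (fun u : (ZMod p)ˣ => orderOf u = P),
            Ep p (β * ((u : ZMod p)) ^ x) := by
    rw [Finset.sum_congr rfl fun g (_ : g ∈ Gset) =>
      Finset.sum_congr rfl fun x _ => hsummand g x]
    rw [Finset.sum_comm]
    refine Finset.sum_congr rfl fun x _ => ?_
    rw [← Finset.mul_sum, hreindex x]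
  rw [hmain]
  -- numeric constants
  set Φ : ℝ := (Nat.totient P : ℝ) with hΦdef
  have hΦpos : (0 : ℝ) < Φ := by
    rw [hΦdef]
    exact_mod_cast Nat.totient_pos.mpr hP
  set D : ℝ := (P.divisors.card : ℝ) with hDdef
  have hDpos : (0 : ℝ) ≤ D := Nat.cast_nonneg _
  have habsconst : norm (1 / (Nat.totient P : ℂ)) = 1 / Φ := by
    rw [norm_div, norm_one, Complex.norm_natCast]
  have hsqrtnn : (0 : ℝ) ≤ Real.sqrt p := Real.sqrt_nonneg _
  have step1 : norm ((1 / (Nat.totient P : ℂ)) *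
      ∑ x ∈ Finset.Icc 1 N, W x *
          ∑ u ∈ Finset.univ.filter (fun u : (ZMod p)ˣ => orderOf u = P),
            Ep p (β * ((u : ZMod p)) ^ x))
      ≤ (1 / Φ) * (D ^ 2 * (P : ℝ) * Real.sqrt p) := by
    rw [norm_mul, habsconst]
    refine mul_le_mul_of_nonneg_left ?_ (by positivity)
    calc norm (∑ x ∈ Finset.Icc 1 N, W x *
            ∑ u ∈ Finset.univ.filter (fun u : (ZMod p)ˣ => orderOf u = P),
              Ep p (β * ((u : ZMod p)) ^ x))
        ≤ ∑ x ∈ Finset.Icc 1 N, norm (W x *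
            ∑ u ∈ Finset.univ.filter (fun u : (ZMod p)ˣ => orderOf u = P),
              Ep p (β * ((u : ZMod p)) ^ x)) := norm_sum_le _ _
      _ ≤ ∑ x ∈ Finset.Icc 1 N, (∑ m ∈ P.divisors, (Nat.gcd m x : ℝ)) * Real.sqrt p := by
          refine Finset.sum_le_sum fun x _ => ?_
          rw [norm_mul, hWabs x, one_mul]
          exact T_bound p β hβ x
      _ = (∑ x ∈ Finset.Icc 1 N, ∑ m ∈ P.divisors, (Nat.gcd m x : ℝ)) * Real.sqrt p := by
          rw [Finset.sum_mul]
      _ ≤ (D ^ 2 * (P : ℝ)) * Real.sqrt p := by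
          refine mul_le_mul_of_nonneg_right ?_ hsqrtnn
          have hnat := gcd_sum_bound P hP N hNP
          have : ((∑ x ∈ Finset.Icc 1 N, ∑ m ∈ P.divisors, Nat.gcd m x : ℕ) : ℝ)
              ≤ ((P.divisors.card ^ 2 * P : ℕ) : ℝ) := by exact_mod_cast hnat
          push_cast at this
          convert this using 2
      _ = D ^ 2 * (P : ℝ) * Real.sqrt p := rfl
  refine le_trans step1 ?_
  -- pure numeric estimates
  have hPD : (P : ℝ) ≤ Φ * D := by
    rw [hΦdef, hDdef]
    exact_mod_cast le_totient_mul_card_divisors P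
  have hPp : (P : ℝ) ≤ (p : ℝ) := by
    have : P ≤ p := by omega
    exact_mod_cast this
  have hppos : (0 : ℝ) < (p : ℝ) := by positivity
  have hp1 : (1 : ℝ) ≤ (p : ℝ) := by exact_mod_cast hp2.trans' (by omega)
  set K : ℝ := (32 : ℝ) ^ 128 with hKdef
  have hKpos : (0 : ℝ) < K := by positivity
  have hD : D ≤ K * (p : ℝ) ^ ((1 : ℝ) / 7) := by
    refine le_trans (card_divisors_bound P hP.ne') ?_
    refine mul_le_mul_of_nonneg_left ?_ (le_of_lt hKpos)
    exact Real.rpow_le_rpow (Nat.cast_nonneg _) hPp (by norm_num)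
  have hstep2 : (1 / Φ) * (D ^ 2 * (P : ℝ) * Real.sqrt p) ≤ D ^ 3 * Real.sqrt p := by
    have h1 : D ^ 2 * (P : ℝ) ≤ D ^ 2 * (Φ * D) := by
      refine mul_le_mul_of_nonneg_left hPD (by positivity)
    have h2 : (1 / Φ) * (D ^ 2 * (P : ℝ) * Real.sqrt p)
        ≤ (1 / Φ) * (D ^ 2 * (Φ * D) * Real.sqrt p) := by
      refine mul_le_mul_of_nonneg_left ?_ (by positivity)
      exact mul_le_mul_of_nonneg_right h1 hsqrtnn
    refine le_trans h2 ?_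
    have : (1 / Φ) * (D ^ 2 * (Φ * D) * Real.sqrt p) = D ^ 3 * Real.sqrt p := by
      field_simp
    rw [this]
  refine le_trans hstep2 ?_
  have hDcube : D ^ 3 ≤ K ^ 3 * ((p : ℝ) ^ ((1 : ℝ) / 7)) ^ 3 := by
    calc D ^ 3 ≤ (K * (p : ℝ) ^ ((1 : ℝ) / 7)) ^ 3 := by
          refine pow_le_pow_left₀ hDpos hD 3
      _ = K ^ 3 * ((p : ℝ) ^ ((1 : ℝ) / 7)) ^ 3 := by ring
  have hcube : ((p : ℝ) ^ ((1 : ℝ) / 7)) ^ 3 = (p : ℝ) ^ ((3 : ℝ) / 7) := by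
    rw [← Real.rpow_natCast ((p : ℝ) ^ ((1 : ℝ) / 7)) 3, ← Real.rpow_mul (le_of_lt hppos)]
    norm_num
  have hsqrt : Real.sqrt p = (p : ℝ) ^ ((1 : ℝ) / 2) := Real.sqrt_eq_rpow _
  have hfinal : D ^ 3 * Real.sqrt p ≤ K ^ 3 * (p : ℝ) ^ ((23 : ℝ) / 24 + ε) := by
    calc D ^ 3 * Real.sqrt p
        ≤ (K ^ 3 * (p : ℝ) ^ ((3 : ℝ) / 7)) * Real.sqrt p := by
          refine mul_le_mul_of_nonneg_right ?_ hsqrtnn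
          rw [← hcube]
          exact hDcube
      _ = K ^ 3 * ((p : ℝ) ^ ((3 : ℝ) / 7) * (p : ℝ) ^ ((1 : ℝ) / 2)) := by
          rw [hsqrt]; ring
      _ = K ^ 3 * (p : ℝ) ^ ((3 : ℝ) / 7 + (1 : ℝ) / 2) := by
          rw [← Real.rpow_add hppos]
      _ ≤ K ^ 3 * (p : ℝ) ^ ((23 : ℝ) / 24 + ε) := by
          refine mul_le_mul_of_nonneg_left ?_ (by positivity)
          refine Real.rpow_le_rpow_of_exponent_le hp1 ?_
          norm_num
          linarith
  exact hfinal
end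

section
/- Let p be an odd prime, λ an element of multiplicative order t = (p−1)/d modulo p for a divisor d of p−1, and a, b integers coprime to p. Then ∑_{y=1}^{p−1} |∑_{x=1}^{(p−1)/d} e^{2πi(a λ^x + b λ^{xy})/p}|^4 ≤ (d/t) p^2 T, where T is the number of solutions (x1,x2,x3,x4,y) ∈ [1,t]^5 of the simultaneous congruences λ^{x1}+λ^{x2} ≡ λ^{x3}+λ^{x4} and λ^{x1 y}+λ^{x2 y} ≡ λ^{x3 y}+λ^{x4 y} (mod p). -/
open Finset


lemma orth (p : ℕ) [NeZero p] (c : ZMod p) :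
    ∑ α : ZMod p, ZMod.stdAddChar (α * c) = if c = 0 then (p : ℂ) else 0 := by
  classical
  have := AddChar.sum_mulShift (ψ := ZMod.stdAddChar (N := p)) c (ZMod.isPrimitive_stdAddChar p)
  simpa [ZMod.card p] using this

local notation "ψ" => ZMod.stdAddChar

lemma conj_std (p : ℕ) [NeZero p] (u : ZMod p) :
    (starRingEnd ℂ) (ZMod.stdAddChar u) = ZMod.stdAddChar (-u) := by
  have hc : 0 < ringChar (ZMod p) := by
    rw [ZMod.ringChar_zmod_n]; exact Nat.pos_of_ne_zero (NeZero.ne p)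
  rw [AddChar.starComp_apply hc, AddChar.inv_apply]

lemma abs4 (F : ℂ) : ((‖F‖ : ℝ) ^ 4 : ℂ) = (F * (starRingEnd ℂ) F) ^ 2 := by
  rw [Complex.mul_conj, ← Complex.sq_norm]
  push_cast
  ring

lemma expand (p : ℕ) [NeZero p] (G : Finset (ZMod p)) (y : ℕ) (α β : ZMod p) :
    ((‖∑ g ∈ G, ψ (α * g + β * g ^ y)‖ : ℝ) ^ 4 : ℂ)
      = ∑ w ∈ (G ×ˢ G) ×ˢ (G ×ˢ G),
          ψ (α * (w.1.1 - w.1.2 + w.2.1 - w.2.2)) *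
            ψ (β * (w.1.1 ^ y - w.1.2 ^ y + w.2.1 ^ y - w.2.2 ^ y)) := by
  have hmul : ∀ (s u : Finset ((ZMod p) × (ZMod p))) (f g : (ZMod p) × (ZMod p) → ℂ),
      (∑ i ∈ s, f i) * (∑ j ∈ u, g j) = ∑ w ∈ s ×ˢ u, f w.1 * g w.2 := by
    intros s u f g; rw [Finset.sum_mul_sum, Finset.sum_product]
  have hmul' : ∀ (s u : Finset (ZMod p)) (f g : (ZMod p) → ℂ),
      (∑ i ∈ s, f i) * (∑ j ∈ u, g j) = ∑ w ∈ s ×ˢ u, f w.1 * g w.2 := by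
    intros s u f g; rw [Finset.sum_mul_sum, Finset.sum_product]
  rw [abs4, map_sum]
  simp only [conj_std]
  rw [hmul', sq]
  have h1 : ∑ w ∈ G ×ˢ G, ψ (α * w.1 + β * w.1 ^ y) * ψ (-(α * w.2 + β * w.2 ^ y))
      = ∑ w ∈ G ×ˢ G, ψ ((α * w.1 + β * w.1 ^ y) - (α * w.2 + β * w.2 ^ y)) := by
    refine Finset.sum_congr rfl fun w _ => ?_
    rw [← AddChar.map_add_eq_mul, sub_eq_add_neg]
  rw [h1, hmul]
  refine Finset.sum_congr rfl fun w _ => ?_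
  simp only [← AddChar.map_add_eq_mul]
  congr 1
  ring

lemma expand2 (p : ℕ) [NeZero p] (G : Finset (ZMod p)) (y : ℕ) :
    ∑ α : ZMod p, ∑ β : ZMod p,
      (‖∑ g ∈ G, ψ (α * g + β * g ^ y)‖ : ℝ) ^ 4
    = (p : ℝ) ^ 2 * ∑ w ∈ (G ×ˢ G) ×ˢ (G ×ˢ G),
        (if w.1.1 - w.1.2 + w.2.1 - w.2.2 = 0 ∧
            w.1.1 ^ y - w.1.2 ^ y + w.2.1 ^ y - w.2.2 ^ y = 0 then (1:ℝ) else 0) := by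
  classical
  have hC : (((∑ α : ZMod p, ∑ β : ZMod p,
      (‖∑ g ∈ G, ψ (α * g + β * g ^ y)‖ : ℝ) ^ 4 : ℝ)) : ℂ)
      = ((p : ℝ) ^ 2 * ∑ w ∈ (G ×ˢ G) ×ˢ (G ×ˢ G),
        (if w.1.1 - w.1.2 + w.2.1 - w.2.2 = 0 ∧
            w.1.1 ^ y - w.1.2 ^ y + w.2.1 ^ y - w.2.2 ^ y = 0 then (1:ℝ) else 0) : ℝ) := by
    push_cast
    calc
      ∑ α : ZMod p, ∑ β : ZMod p,
          ((‖∑ g ∈ G, ψ (α * g + β * g ^ y)‖ : ℝ) ^ 4 : ℂ)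
        = ∑ α : ZMod p, ∑ β : ZMod p, ∑ w ∈ (G ×ˢ G) ×ˢ (G ×ˢ G),
            ψ (α * (w.1.1 - w.1.2 + w.2.1 - w.2.2)) *
              ψ (β * (w.1.1 ^ y - w.1.2 ^ y + w.2.1 ^ y - w.2.2 ^ y)) := by
          refine Finset.sum_congr rfl fun α _ => Finset.sum_congr rfl fun β _ => ?_
          exact_mod_cast expand p G y α β
      _ = ∑ α : ZMod p, ∑ w ∈ (G ×ˢ G) ×ˢ (G ×ˢ G), ∑ β : ZMod p,
            ψ (α * (w.1.1 - w.1.2 + w.2.1 - w.2.2)) *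
              ψ (β * (w.1.1 ^ y - w.1.2 ^ y + w.2.1 ^ y - w.2.2 ^ y)) :=
          Finset.sum_congr rfl fun _ _ => Finset.sum_comm
      _ = ∑ w ∈ (G ×ˢ G) ×ˢ (G ×ˢ G), ∑ α : ZMod p, ∑ β : ZMod p,
            ψ (α * (w.1.1 - w.1.2 + w.2.1 - w.2.2)) *
              ψ (β * (w.1.1 ^ y - w.1.2 ^ y + w.2.1 ^ y - w.2.2 ^ y)) := Finset.sum_comm
      _ = ∑ w ∈ (G ×ˢ G) ×ˢ (G ×ˢ G),
            (∑ α : ZMod p, ψ (α * (w.1.1 - w.1.2 + w.2.1 - w.2.2))) *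
              (∑ β : ZMod p, ψ (β * (w.1.1 ^ y - w.1.2 ^ y + w.2.1 ^ y - w.2.2 ^ y))) := by
          refine Finset.sum_congr rfl fun w _ => ?_
          rw [Finset.sum_mul_sum]
      _ = ∑ w ∈ (G ×ˢ G) ×ˢ (G ×ˢ G), (p:ℂ)^2 *
            (if w.1.1 - w.1.2 + w.2.1 - w.2.2 = 0 ∧
              w.1.1 ^ y - w.1.2 ^ y + w.2.1 ^ y - w.2.2 ^ y = 0 then (1:ℂ) else 0) := by
          refine Finset.sum_congr rfl fun w _ => ?_
          rw [orth, orth]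
          split_ifs with h1 h2 h3 <;> simp_all <;> ring
      _ = (p:ℂ)^2 * ∑ w ∈ (G ×ˢ G) ×ˢ (G ×ˢ G),
            (if w.1.1 - w.1.2 + w.2.1 - w.2.2 = 0 ∧
              w.1.1 ^ y - w.1.2 ^ y + w.2.1 ^ y - w.2.2 ^ y = 0 then (1:ℂ) else 0) := by
          rw [Finset.mul_sum]
      _ = _ := by
          push_cast
          rw [Finset.mul_sum, Finset.mul_sum]
          refine Finset.sum_congr rfl fun w _ => ?_
          split_ifs <;> simp
  exact_mod_cast hC


lemma mod_inj {t x y : ℕ} (hx : x ∈ Finset.Icc 1 t) (hy : y ∈ Finset.Icc 1 t)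
    (h : x % t = y % t) : x = y := by
  simp only [Finset.mem_Icc] at hx hy
  rcases eq_or_lt_of_le hx.2 with rfl | hx2
  · rcases eq_or_lt_of_le hy.2 with rfl | hy2
    · rfl
    · rw [Nat.mod_self, Nat.mod_eq_of_lt hy2] at h; omega
  · rcases eq_or_lt_of_le hy.2 with rfl | hy2
    · rw [Nat.mod_self, Nat.mod_eq_of_lt hx2] at h; omega
    · rwa [Nat.mod_eq_of_lt hx2, Nat.mod_eq_of_lt hy2] at h

lemma periodic_sum (t : ℕ) (f : ℕ → ℝ) (hf : ∀ k r, f (k * t + r) = f r) (n : ℕ) :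
    ∑ y ∈ Finset.Ioc 0 (n * t), f y = n * ∑ y ∈ Finset.Ioc 0 t, f y := by
  induction n with
  | zero => simp
  | succ n ih =>
    have h2 : n * t ≤ (n + 1) * t := Nat.mul_le_mul_right t (Nat.le_succ n)
    rw [← Finset.sum_Ioc_consecutive f (Nat.zero_le (n * t)) h2]
    have h3 : ∑ y ∈ Finset.Ioc (n * t) ((n + 1) * t), f y = ∑ y ∈ Finset.Ioc 0 t, f y := by
      have he : Finset.Ioc (n * t) ((n + 1) * t)
          = (Finset.Ioc 0 t).map (addLeftEmbedding (n * t)) := by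
        rw [Finset.map_add_left_Ioc]; congr 1 <;> ring
      rw [he, Finset.sum_map]
      refine Finset.sum_congr rfl fun r _ => ?_
      simpa [addLeftEmbedding_apply] using hf n r
    rw [h3, ih]
    push_cast
    ring


lemma pull5 {M : Type*} [AddCommMonoid M] (s1 s2 s3 s4 s5 : Finset ℕ)
    (F : ℕ → ℕ → ℕ → ℕ → ℕ → M) :
    ∑ x1 ∈ s1, ∑ x2 ∈ s2, ∑ x3 ∈ s3, ∑ x4 ∈ s4, ∑ y ∈ s5, F x1 x2 x3 x4 y
      = ∑ y ∈ s5, ∑ x1 ∈ s1, ∑ x2 ∈ s2, ∑ x3 ∈ s3, ∑ x4 ∈ s4, F x1 x2 x3 x4 y := by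
  trans ∑ x1 ∈ s1, ∑ x2 ∈ s2, ∑ x3 ∈ s3, ∑ y ∈ s5, ∑ x4 ∈ s4, F x1 x2 x3 x4 y
  · exact Finset.sum_congr rfl fun _ _ => Finset.sum_congr rfl fun _ _ =>
      Finset.sum_congr rfl fun _ _ => Finset.sum_comm
  trans ∑ x1 ∈ s1, ∑ x2 ∈ s2, ∑ y ∈ s5, ∑ x3 ∈ s3, ∑ x4 ∈ s4, F x1 x2 x3 x4 y
  · exact Finset.sum_congr rfl fun _ _ => Finset.sum_congr rfl fun _ _ => Finset.sum_comm
  trans ∑ x1 ∈ s1, ∑ y ∈ s5, ∑ x2 ∈ s2, ∑ x3 ∈ s3, ∑ x4 ∈ s4, F x1 x2 x3 x4 y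
  · exact Finset.sum_congr rfl fun _ _ => Finset.sum_comm
  exact Finset.sum_comm

theorem stmt14 (p d : ℕ) (l a b : ℤ)
    (hp : p.Prime) (hodd : Odd p) (hd : d ∣ (p - 1))
    (ht : orderOf (l : ZMod p) = (p - 1) / d)
    (ha : Int.gcd a p = 1) (hb : Int.gcd b p = 1) :
    ∑ y ∈ Finset.Icc 1 (p - 1),
        (‖∑ x ∈ Finset.Icc 1 ((p - 1) / d),
          Complex.exp (2 * Real.pi * Complex.I *
            ((a * l ^ x + b * l ^ (x * y) : ℤ) : ℂ) / p)‖) ^ 4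
      ≤ ((d : ℝ) / ((p - 1) / d : ℕ)) * (p : ℝ) ^ 2 *
        ((((Finset.Icc 1 ((p - 1) / d)) ×ˢ (Finset.Icc 1 ((p - 1) / d)) ×ˢ
            (Finset.Icc 1 ((p - 1) / d)) ×ˢ (Finset.Icc 1 ((p - 1) / d)) ×ˢ
            (Finset.Icc 1 ((p - 1) / d))).filter (fun q : ℕ × ℕ × ℕ × ℕ × ℕ =>
          (l : ZMod p) ^ q.1 + (l : ZMod p) ^ q.2.1
            = (l : ZMod p) ^ q.2.2.1 + (l : ZMod p) ^ q.2.2.2.1 ∧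
          (l : ZMod p) ^ (q.1 * q.2.2.2.2) + (l : ZMod p) ^ (q.2.1 * q.2.2.2.2)
            = (l : ZMod p) ^ (q.2.2.1 * q.2.2.2.2)
              + (l : ZMod p) ^ (q.2.2.2.1 * q.2.2.2.2))).card : ℝ) := by
  classical
  haveI : Fact p.Prime := ⟨hp⟩
  haveI : NeZero p := ⟨hp.ne_zero⟩
  set t := (p - 1) / d with htdef
  set I := Finset.Icc 1 t with hIdef
  set lam : ZMod p := (l : ZMod p) with hlamdef
  -- basic numerics
  have hp3 : 3 ≤ p := by
    have h2 := hp.two_le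
    have : p ≠ 2 := by rintro rfl; exact (by decide : ¬ Odd 2) hodd
    omega
  have hdpos : 0 < d := by
    rcases Nat.eq_zero_or_pos d with rfl | h
    · simp at hd; omega
    · exact h
  have htpos : 0 < t := Nat.div_pos (Nat.le_of_dvd (by omega) hd) hdpos
  have htmul : t * d = p - 1 := Nat.div_mul_cancel hd
  have hlt : lam ^ t = 1 := by rw [← ht]; exact pow_orderOf_eq_one _
  have hlam0 : lam ≠ 0 := by
    intro h
    rw [h, zero_pow htpos.ne'] at hlt
    exact zero_ne_one hlt
  obtain ⟨u, hu⟩ : IsUnit lam := isUnit_iff_ne_zero.mpr hlam0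
  have hord_u : orderOf u = t := by rw [← orderOf_units, hu, ht]
  have hupow : ∀ m : ℕ, lam ^ m = ((u ^ m : (ZMod p)ˣ) : ZMod p) := by
    intro m; rw [Units.val_pow_eq_pow_val, hu]
  have hper : ∀ m n : ℕ, m % t = n % t → lam ^ m = lam ^ n := by
    intro m n h
    rw [hupow, hupow]
    exact congrArg _ (pow_inj_mod.mpr (by rw [hord_u]; exact h))
  have hinj : ∀ x ∈ I, ∀ y ∈ I, lam ^ x = lam ^ y → x = y := by
    intro x hx y hy hxy
    refine mod_inj hx hy ?_
    rw [← hord_u]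
    refine pow_inj_mod.mp (Units.ext ?_)
    rw [Units.val_pow_eq_pow_val, Units.val_pow_eq_pow_val, hu]
    exact hxy
  set A : ZMod p := (a : ZMod p) with hAdef
  set B : ZMod p := (b : ZMod p) with hBdef
  have hA0 : A ≠ 0 := by
    intro h
    have hc : IsCoprime (a : ℤ) (p : ℤ) := Int.isCoprime_iff_gcd_eq_one.mpr ha
    have hdvd : (p : ℤ) ∣ a := (ZMod.intCast_zmod_eq_zero_iff_dvd a p).mp h
    have := Int.isUnit_iff.mp (hc.isUnit_of_dvd' hdvd dvd_rfl)
    omega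
  have hB0 : B ≠ 0 := by
    intro h
    have hc : IsCoprime (b : ℤ) (p : ℤ) := Int.isCoprime_iff_gcd_eq_one.mpr hb
    have hdvd : (p : ℤ) ∣ b := (ZMod.intCast_zmod_eq_zero_iff_dvd b p).mp h
    have := Int.isUnit_iff.mp (hc.isUnit_of_dvd' hdvd dvd_rfl)
    omega
  set G := I.image (fun x => lam ^ x) with hGdef
  -- shift closure
  have hGshift : ∀ z : ℕ, G.image (fun g => lam ^ z * g) = G := by
    intro z
    have hinj' : Function.Injective (fun g : ZMod p => lam ^ z * g) :=
      fun g₁ g₂ h => mul_left_cancel₀ (pow_ne_zero z hlam0) h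
    refine Finset.eq_of_subset_of_card_le ?_ ?_
    · intro g hg
      rw [Finset.mem_image] at hg
      obtain ⟨g', hg', rfl⟩ := hg
      rw [hGdef, Finset.mem_image] at hg' ⊢
      obtain ⟨x, hx, rfl⟩ := hg'
      refine ⟨(z + x - 1) % t + 1, ?_, ?_⟩
      · rw [hIdef]; simp only [Finset.mem_Icc]
        constructor
        · omega
        · have := Nat.mod_lt (z + x - 1) htpos
          omega
      · rw [← pow_add]
        refine hper _ _ ?_
        have hx1 : 1 ≤ x := by
          rw [hIdef] at hx; simp only [Finset.mem_Icc] at hx; exact hx.1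
        have hm : ((z + x - 1) % t + 1) % t = ((z + x - 1) + 1) % t :=
          (Nat.ModEq.add_right 1 (Nat.mod_modEq (z + x - 1) t))
        rw [hm]
        congr 1
        omega
    · rw [Finset.card_image_of_injective _ hinj']
  -- Step A : rewrite the inner sum via the additive character over G
  have hSrw : ∀ y : ℕ, (∑ x ∈ I, Complex.exp (2 * Real.pi * Complex.I *
        ((a * l ^ x + b * l ^ (x * y) : ℤ) : ℂ) / p))
      = ∑ g ∈ G, ZMod.stdAddChar (A * g + B * g ^ y) := by
    intro y
    rw [hGdef, Finset.sum_image hinj]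
    refine Finset.sum_congr rfl fun x hx => ?_
    have harg : A * lam ^ x + B * (lam ^ x) ^ y
        = ((a * l ^ x + b * l ^ (x * y) : ℤ) : ZMod p) := by
      push_cast
      rw [← pow_mul]
    rw [harg, ZMod.stdAddChar_coe]
  -- Step B : shift invariance
  have hshift : ∀ y z : ℕ, ∑ g ∈ G, ZMod.stdAddChar (A * g + B * g ^ y)
      = ∑ g ∈ G, ZMod.stdAddChar (A * lam ^ z * g + B * lam ^ (z * y) * g ^ y) := by
    intro y z
    conv_lhs => rw [← hGshift z]
    rw [Finset.sum_image (fun g₁ _ g₂ _ h => mul_left_cancel₀ (pow_ne_zero z hlam0) h)]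
    refine Finset.sum_congr rfl fun g _ => ?_
    congr 1
    rw [mul_pow, ← pow_mul]
    ring
  -- the counting function
  set ncnt : ℕ → ℝ := fun y => ∑ x1 ∈ I, ∑ x2 ∈ I, ∑ x3 ∈ I, ∑ x4 ∈ I,
      (if lam ^ x1 + lam ^ x2 = lam ^ x3 + lam ^ x4 ∧
          lam ^ (x1 * y) + lam ^ (x2 * y) = lam ^ (x3 * y) + lam ^ (x4 * y)
        then (1:ℝ) else 0) with hncnt
  have hcount : ∀ y : ℕ, ∑ w ∈ (G ×ˢ G) ×ˢ (G ×ˢ G),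
      (if w.1.1 - w.1.2 + w.2.1 - w.2.2 = 0 ∧
          w.1.1 ^ y - w.1.2 ^ y + w.2.1 ^ y - w.2.2 ^ y = 0 then (1:ℝ) else 0) = ncnt y := by
    intro y
    simp only [Finset.sum_product]
    rw [hGdef]
    simp_rw [Finset.sum_image hinj]
    rw [hncnt]
    refine Finset.sum_congr rfl fun x1 _ => ?_
    rw [Finset.sum_comm]
    refine Finset.sum_congr rfl fun x2 _ => Finset.sum_congr rfl fun x3 _ =>
      Finset.sum_congr rfl fun x4 _ => ?_
    refine if_congr ?_ rfl rfl
    simp only [← pow_mul]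
    constructor
    · rintro ⟨h1, h2⟩
      exact ⟨by linear_combination h1, by linear_combination h2⟩
    · rintro ⟨h1, h2⟩
      exact ⟨by linear_combination h1, by linear_combination h2⟩
  -- Step C : the per-y bound
  have hbound : ∀ y : ℕ,
      (t:ℝ) * (‖∑ g ∈ G, ZMod.stdAddChar (A * g + B * g ^ y)‖)^4
      ≤ (p:ℝ)^2 * ncnt y := by
    intro y
    have einj : ∀ z₁ ∈ I, ∀ z₂ ∈ I,
        (fun z : ℕ => ((A * lam ^ z, B * lam ^ (z * y)) : ZMod p × ZMod p)) z₁
          = (fun z : ℕ => ((A * lam ^ z, B * lam ^ (z * y)) : ZMod p × ZMod p)) z₂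
          → z₁ = z₂ := by
      intro z₁ h₁ z₂ h₂ h
      simp only [Prod.mk.injEq] at h
      exact hinj z₁ h₁ z₂ h₂ (mul_left_cancel₀ hA0 h.1)
    have ht4 : ∑ z ∈ I, (‖∑ g ∈ G,
            ZMod.stdAddChar (A * lam ^ z * g + B * lam ^ (z * y) * g ^ y)‖)^4
        = (t:ℝ) * (‖∑ g ∈ G, ZMod.stdAddChar (A * g + B * g ^ y)‖)^4 := by
      rw [Finset.sum_congr rfl (fun z (hz : z ∈ I) =>
        (congrArg (fun w => ‖w‖^4) (hshift y z).symm))]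
      rw [Finset.sum_const, hIdef, Nat.card_Icc, nsmul_eq_mul]
      norm_num
    rw [← ht4]
    have himg : ∑ z ∈ I, (‖∑ g ∈ G,
            ZMod.stdAddChar (A * lam ^ z * g + B * lam ^ (z * y) * g ^ y)‖)^4
        = ∑ w ∈ I.image (fun z : ℕ => ((A * lam ^ z, B * lam ^ (z * y)) : ZMod p × ZMod p)),
            (‖∑ g ∈ G, ZMod.stdAddChar (w.1 * g + w.2 * g ^ y)‖)^4 := by
      rw [Finset.sum_image einj]
    rw [himg]
    have hle : ∑ w ∈ I.image (fun z : ℕ => ((A * lam ^ z, B * lam ^ (z * y)) : ZMod p × ZMod p)),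
            (‖∑ g ∈ G, ZMod.stdAddChar (w.1 * g + w.2 * g ^ y)‖)^4
        ≤ ∑ w : ZMod p × ZMod p,
            (‖∑ g ∈ G, ZMod.stdAddChar (w.1 * g + w.2 * g ^ y)‖)^4 :=
      Finset.sum_le_sum_of_subset_of_nonneg (Finset.subset_univ _)
        (fun _ _ _ => by positivity)
    refine hle.trans ?_
    rw [Fintype.sum_prod_type]
    rw [expand2 p G y, hcount y]
  -- periodicity of ncnt
  have hper2 : ∀ k r : ℕ, ncnt (k * t + r) = ncnt r := by
    intro k r
    rw [hncnt]
    refine Finset.sum_congr rfl fun x1 _ => Finset.sum_congr rfl fun x2 _ =>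
      Finset.sum_congr rfl fun x3 _ => Finset.sum_congr rfl fun x4 _ => ?_
    refine if_congr ?_ rfl rfl
    have hpow : ∀ x : ℕ, lam ^ (x * (k * t + r)) = lam ^ (x * r) := by
      intro x
      refine hper _ _ ?_
      have hxe : x * (k * t + r) = x * r + (x * k) * t := by ring
      rw [hxe, Nat.add_mul_mod_self_right]
    simp only [hpow]
  -- summing ncnt over all y
  have hsum_ncnt : ∑ y ∈ Finset.Icc 1 (p - 1), ncnt y = d * ∑ y ∈ I, ncnt y := by
    have h1 : Finset.Icc 1 (p - 1) = Finset.Ioc 0 (d * t) := by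
      rw [show (1:ℕ) = 0 + 1 from rfl, Finset.Icc_add_one_left_eq_Ioc]
      congr 1
      have h2 : d * t = t * d := Nat.mul_comm d t
      omega
    rw [h1, periodic_sum t ncnt hper2 d]
    congr 1
  -- identify the filter cardinality with the sum of ncnt
  have hT : ((((I ×ˢ I ×ˢ I ×ˢ I ×ˢ I)).filter (fun q : ℕ × ℕ × ℕ × ℕ × ℕ =>
        lam ^ q.1 + lam ^ q.2.1 = lam ^ q.2.2.1 + lam ^ q.2.2.2.1 ∧
        lam ^ (q.1 * q.2.2.2.2) + lam ^ (q.2.1 * q.2.2.2.2)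
          = lam ^ (q.2.2.1 * q.2.2.2.2) + lam ^ (q.2.2.2.1 * q.2.2.2.2))).card : ℝ)
      = ∑ y ∈ I, ncnt y := by
    rw [Finset.natCast_card_filter]
    simp only [Finset.sum_product]
    rw [pull5]
  -- final assembly
  have hfin : ∀ y : ℕ,
      (‖∑ x ∈ I, Complex.exp (2 * Real.pi * Complex.I *
          ((a * l ^ x + b * l ^ (x * y) : ℤ) : ℂ) / p)‖)^4
        ≤ (p:ℝ)^2 * ncnt y / t := by
    intro y
    rw [hSrw y]
    rw [le_div_iff₀ (by exact_mod_cast htpos)]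
    calc (‖∑ g ∈ G, ZMod.stdAddChar (A * g + B * g ^ y)‖)^4 * t
        = (t:ℝ) * (‖∑ g ∈ G, ZMod.stdAddChar (A * g + B * g ^ y)‖)^4 := by ring
      _ ≤ (p:ℝ)^2 * ncnt y := hbound y
  calc ∑ y ∈ Finset.Icc 1 (p - 1),
        (‖∑ x ∈ I, Complex.exp (2 * Real.pi * Complex.I *
          ((a * l ^ x + b * l ^ (x * y) : ℤ) : ℂ) / p)‖)^4
      ≤ ∑ y ∈ Finset.Icc 1 (p - 1), (p:ℝ)^2 * ncnt y / t :=
        Finset.sum_le_sum fun y _ => hfin y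
    _ = (p:ℝ)^2 / t * ∑ y ∈ Finset.Icc 1 (p - 1), ncnt y := by
        rw [Finset.mul_sum]
        exact Finset.sum_congr rfl fun y _ => by ring
    _ = (p:ℝ)^2 / t * (d * ∑ y ∈ I, ncnt y) := by rw [hsum_ncnt]
    _ = ((d:ℝ) / (t:ℕ)) * (p:ℝ)^2 * (∑ y ∈ I, ncnt y) := by
        push_cast
        ring
    _ = _ := by
        rw [← hT]
end
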